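/- Let v, w ∈ B_n, let t be a reflection of B_n, and suppose w = vt. Then ℓ_S(w) = ℓ_S(v) + ℓ_S(t) if and only if one of the following holds: (1) t = t_{ij} with 1≤i<j≤n, w(i) > w(j), and for all k with i<k<j one has w(i) > w(k) > w(j); (2) t = t_{−i,j} with 1≤i<j≤n, w(i)<0, w(j)<0, for all k with 1≤k<i one has w(k) > w(i) and w(k)+w(j) < 0, and for all k'≠i with 1≤k'<j one has w(k') > w(j) and w(i)+w(k') < 0; (3) t = t_{−i,i} with 1≤i≤n, w(i)<0, and for all k with 1≤k<i one has |w(k)| < |w(i)|. -/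

import Mathlib

open Equiv

/-- The defining condition for membership in the signed permutation group `B_n`:
a permutation of `ℤ` that commutes with negation and fixes every integer of
absolute value greater than `n`. -/
def IsSignedPerm (n : ℕ) (w : Equiv.Perm ℤ) : Prop :=
  (∀ i : ℤ, w (-i) = -(w i)) ∧ ∀ i : ℤ, (n : ℤ) < |i| → w i = i

/-- The signed permutation group `B_n`, realized as a subgroup of the permutations of `ℤ`. -/
def BGroup (n : ℕ) : Subgroup (Equiv.Perm ℤ) where
  carrier := {w | IsSignedPerm n w}
  one_mem' := ⟨fun _ => rfl, fun _ _ => rfl⟩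
  mul_mem' := by
    rintro a b ⟨ha1, ha2⟩ ⟨hb1, hb2⟩
    refine ⟨fun i => ?_, fun i hi => ?_⟩
    · simp only [Equiv.Perm.mul_apply, hb1, ha1]
    · simp only [Equiv.Perm.mul_apply, hb2 i hi, ha2 i hi]
  inv_mem' := by
    rintro a ⟨ha1, ha2⟩
    refine ⟨fun i => a.injective ?_, fun i hi => a.injective ?_⟩
    · rw [(show ∀ x, a (a⁻¹ x) = x from fun x => a.apply_symm_apply x), ha1, (show ∀ x, a (a⁻¹ x) = x from fun x => a.apply_symm_apply x)]
    · rw [(show ∀ x, a (a⁻¹ x) = x from fun x => a.apply_symm_apply x), ha2 i hi]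

/-- `Neg(w)`: the set of positions `i ∈ [1, n]` carrying a negative entry. -/
noncomputable def negSet (n : ℕ) (w : Equiv.Perm ℤ) : Finset ℤ :=
  (Finset.Icc (1 : ℤ) (n : ℤ)).filter (fun i => w i < 0)

/-- `neg(w)`: the number of negative entries in the window of `w`. -/
noncomputable def negB (n : ℕ) (w : Equiv.Perm ℤ) : ℕ := (negSet n w).card

/-- `k` is a boundary of the type B block decomposition of `w`, i.e. `w` maps
`{1, …, k}` onto `{±1, …, ±k}` (for `0 ≤ k ≤ n`). -/
def IsBdry (n : ℕ) (w : Equiv.Perm ℤ) (k : ℕ) : Prop :=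
  k ≤ n ∧ ∀ i : ℤ, 1 ≤ i → i ≤ (k : ℤ) → |w i| ≤ (k : ℤ)

/-- The number of negative entries among the first `k` entries of the window of `w`. -/
noncomputable def negUpTo (w : Equiv.Perm ℤ) (k : ℕ) : ℕ :=
  ((Finset.Icc (1 : ℤ) (k : ℤ)).filter (fun i => w i < 0)).card

/-- `o^B(w)`: the number of blocks of the type B decomposition of `w` containing an odd
number of negative entries.  A block is the interval between two consecutive boundaries,
and it is counted here via its right endpoint `k` (with left endpoint `k'` the previous
boundary); it has an odd number of negative entries exactly when the parities of
`negUpTo w k` and `negUpTo w k'` differ. -/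
noncomputable def oB (n : ℕ) (w : Equiv.Perm ℤ) : ℕ :=
  {k : ℕ | 1 ≤ k ∧ IsBdry n w k ∧ ∃ k' < k, IsBdry n w k' ∧
    (∀ m : ℕ, k' < m → m < k → ¬ IsBdry n w m) ∧
    negUpTo w k % 2 ≠ negUpTo w k' % 2}.ncard

/-- The number of blocks of the type B decomposition of `w`
(each block is counted via its right endpoint, a nonzero boundary). -/
noncomputable def numBlocksB (n : ℕ) (w : Equiv.Perm ℤ) : ℕ :=
  {k : ℕ | 1 ≤ k ∧ IsBdry n w k}.ncard

/-- The number of blocks of the type D decomposition of `w ∈ D_n`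
(each block is counted via its right endpoint, a nonzero boundary at which the
number of preceding negative entries is even). -/
noncomputable def numBlocksD (n : ℕ) (w : Equiv.Perm ℤ) : ℕ :=
  {k : ℕ | 1 ≤ k ∧ IsBdry n w k ∧ Even (negUpTo w k)}.ncard

/-- `o^D(w)`: the number of type B blocks of `w` minus the number of type D blocks of `w`. -/
noncomputable def oD (n : ℕ) (w : Equiv.Perm ℤ) : ℤ :=
  (numBlocksB n w : ℤ) - (numBlocksD n w : ℤ)

/-- `BReflDepth n t d` means that `t` is a reflection of `B_n` and `d` is its depth:
`t_{ij}` has depth `j - i`, `t_{-i,j}` has depth `i + j - 1`, and `t_{-i,i}` has depth `i`. -/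
def BReflDepth (n : ℕ) (t : Equiv.Perm ℤ) (d : ℤ) : Prop :=
  (∃ i j : ℤ, 1 ≤ i ∧ i < j ∧ j ≤ (n : ℤ) ∧
    t = Equiv.swap i j * Equiv.swap (-i) (-j) ∧ d = j - i) ∨
  (∃ i j : ℤ, 1 ≤ i ∧ i < j ∧ j ≤ (n : ℤ) ∧
    t = Equiv.swap (-i) j * Equiv.swap i (-j) ∧ d = i + j - 1) ∨
  (∃ i : ℤ, 1 ≤ i ∧ i ≤ (n : ℤ) ∧ t = Equiv.swap (-i) i ∧ d = i)

/-- `t` is a reflection of `B_n`. -/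
def IsBRefl (n : ℕ) (t : Equiv.Perm ℤ) : Prop := ∃ d, BReflDepth n t d

/-- `DReflDepth n t d` means that `t` is a reflection of `D_n` and `d` is its depth:
`t_{ij}` has depth `j - i` and `t_{-i,j}` has depth `i + j - 2`. -/
def DReflDepth (n : ℕ) (t : Equiv.Perm ℤ) (d : ℤ) : Prop :=
  (∃ i j : ℤ, 1 ≤ i ∧ i < j ∧ j ≤ (n : ℤ) ∧
    t = Equiv.swap i j * Equiv.swap (-i) (-j) ∧ d = j - i) ∨
  (∃ i j : ℤ, 1 ≤ i ∧ i < j ∧ j ≤ (n : ℤ) ∧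
    t = Equiv.swap (-i) j * Equiv.swap i (-j) ∧ d = i + j - 2)

/-- `t` is a reflection of `D_n`. -/
def IsDRefl (n : ℕ) (t : Equiv.Perm ℤ) : Prop := ∃ d, DReflDepth n t d

/-- The depth of `w ∈ B_n`: the minimum, over all factorizations of `w` into reflections
of `B_n`, of the sum of the depths of the factors. -/
noncomputable def depthB (n : ℕ) (w : Equiv.Perm ℤ) : ℤ :=
  sInf {m : ℤ | ∃ L : List (Equiv.Perm ℤ × ℤ),
    (∀ p ∈ L, BReflDepth n p.1 p.2) ∧ (L.map Prod.fst).prod = w ∧ (L.map Prod.snd).sum = m}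

/-- The depth of `w ∈ D_n`: the minimum, over all factorizations of `w` into reflections
of `D_n`, of the sum of the depths of the factors. -/
noncomputable def depthD (n : ℕ) (w : Equiv.Perm ℤ) : ℤ :=
  sInf {m : ℤ | ∃ L : List (Equiv.Perm ℤ × ℤ),
    (∀ p ∈ L, DReflDepth n p.1 p.2) ∧ (L.map Prod.fst).prod = w ∧ (L.map Prod.snd).sum = m}

/-- The Coxeter generating set `S_B = {t_{-1,1}, t_{12}, …, t_{n-1,n}}` of `B_n`. -/
def SB (n : ℕ) : Set (Equiv.Perm ℤ) :=
  {s | (1 ≤ n ∧ s = Equiv.swap (-1 : ℤ) 1) ∨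
    ∃ i : ℤ, 1 ≤ i ∧ i + 1 ≤ (n : ℤ) ∧
      s = Equiv.swap i (i + 1) * Equiv.swap (-i) (-(i + 1))}

/-- The Coxeter generating set `S_D = {t_{-1,2}, t_{12}, …, t_{n-1,n}}` of `D_n`. -/
def SD (n : ℕ) : Set (Equiv.Perm ℤ) :=
  {s | (2 ≤ n ∧ s = Equiv.swap (-1 : ℤ) 2 * Equiv.swap (1 : ℤ) (-2)) ∨
    ∃ i : ℤ, 1 ≤ i ∧ i + 1 ≤ (n : ℤ) ∧
      s = Equiv.swap i (i + 1) * Equiv.swap (-i) (-(i + 1))}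

/-- The Coxeter length `ℓ_S(w)` of `w ∈ B_n`: the minimal length of a word in `S_B`
whose product is `w`. -/
noncomputable def lenB (n : ℕ) (w : Equiv.Perm ℤ) : ℕ :=
  sInf {r : ℕ | ∃ L : List (Equiv.Perm ℤ), (∀ s ∈ L, s ∈ SB n) ∧ L.prod = w ∧ L.length = r}

/-- The Coxeter length `ℓ_S(w)` of `w ∈ D_n`: the minimal length of a word in `S_D`
whose product is `w`. -/
noncomputable def lenD (n : ℕ) (w : Equiv.Perm ℤ) : ℕ :=
  sInf {r : ℕ | ∃ L : List (Equiv.Perm ℤ), (∀ s ∈ L, s ∈ SD n) ∧ L.prod = w ∧ L.length = r}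

/-- The reflection length `ℓ_T(w)` of `w ∈ B_n`: the minimal number of reflections
whose product is `w`. -/
noncomputable def ellTB (n : ℕ) (w : Equiv.Perm ℤ) : ℕ :=
  sInf {r : ℕ | ∃ L : List (Equiv.Perm ℤ), (∀ t ∈ L, IsBRefl n t) ∧ L.prod = w ∧ L.length = r}

/-- `Σ_{i ∈ [n], w(i) > i} (w(i) - i)`. -/
noncomputable def excSum (n : ℕ) (w : Equiv.Perm ℤ) : ℤ :=
  ∑ i ∈ (Finset.Icc (1 : ℤ) (n : ℤ)).filter (fun i => i < w i), (w i - i)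

/-- `Σ_{i ∈ Neg(w)} |w(i)|`. -/
noncomputable def negAbsSum (n : ℕ) (w : Equiv.Perm ℤ) : ℤ :=
  ∑ i ∈ (Finset.Icc (1 : ℤ) (n : ℤ)).filter (fun i => w i < 0), |w i|

/-- The even signed permutation group `D_n`, the set of elements of `B_n` with an even
number of negative window entries. -/
def DSet (n : ℕ) : Set (Equiv.Perm ℤ) := {w | w ∈ BGroup n ∧ Even (negB n w)}

namespace AuxLen

open Finset

noncomputable section
open scoped Classical

/-- integer indicator of a proposition -/
def ind (p : Prop) : ℤ := if p then 1 else 0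

lemma ind_true {p : Prop} (h : p) : ind p = 1 := if_pos h
lemma ind_false {p : Prop} (h : ¬ p) : ind p = 0 := if_neg h
lemma ind_nonneg (p : Prop) : 0 ≤ ind p := by unfold ind; split_ifs <;> omega
lemma ind_le_one (p : Prop) : ind p ≤ 1 := by unfold ind; split_ifs <;> omega
lemma ind_and_left {p q : Prop} (h : p) : ind (p ∧ q) = ind q := by
  unfold ind
  by_cases hq : q
  · rw [if_pos ⟨h, hq⟩, if_pos hq]
  · rw [if_neg (fun hh => hq hh.2), if_neg hq]
lemma ind_and_false {p q : Prop} (h : ¬ p) : ind (p ∧ q) = 0 :=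
  ind_false (fun hh => h hh.1)

def eta (c : ℤ) : ℤ := if c < 0 then -c else 0

lemma eta_pair (a : ℤ) : eta a - eta (-a) = -a := by unfold eta; split_ifs <;> omega

def invB (n : ℕ) (w : Equiv.Perm ℤ) : ℤ :=
  ∑ x ∈ Finset.Icc (1:ℤ) (n:ℤ), ∑ y ∈ Finset.Icc (1:ℤ) (n:ℤ), ind (x < y ∧ w y < w x)

def nsB (n : ℕ) (w : Equiv.Perm ℤ) : ℤ := ∑ k ∈ Finset.Icc (1:ℤ) (n:ℤ), eta (w k)

def statB (n : ℕ) (w : Equiv.Perm ℤ) : ℤ := invB n w + nsB n w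

lemma statB_nonneg (n : ℕ) (w : Equiv.Perm ℤ) : 0 ≤ statB n w := by
  have h1 : 0 ≤ invB n w := Finset.sum_nonneg fun x _ =>
    Finset.sum_nonneg fun y _ => ind_nonneg _
  have h2 : 0 ≤ nsB n w := Finset.sum_nonneg fun k hk => by
    simp only [Finset.mem_Icc] at hk; unfold eta; split_ifs <;> omega
  unfold statB; omega

lemma statB_one (n : ℕ) : statB n (1 : Equiv.Perm ℤ) = 0 := by
  have h1 : invB n 1 = 0 := by
    apply Finset.sum_eq_zero
    intro x _
    apply Finset.sum_eq_zero
    intro y _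
    simp only [Equiv.Perm.one_apply]
    exact ind_false (by omega)
  have h2 : nsB n 1 = 0 := by
    apply Finset.sum_eq_zero
    intro k hk
    simp only [Finset.mem_Icc] at hk
    simp only [Equiv.Perm.one_apply]
    unfold eta; split_ifs <;> omega
  unfold statB
  rw [h1, h2]
  ring

variable {n : ℕ} {w : Equiv.Perm ℤ}

lemma w_neg (hw : w ∈ BGroup n) (x : ℤ) : w (-x) = -(w x) := hw.1 x

lemma w_zero (hw : w ∈ BGroup n) : w 0 = 0 := by
  have h := hw.1 0; rw [neg_zero] at h; omega

lemma w_ne_zero (hw : w ∈ BGroup n) {x : ℤ} (hx : x ≠ 0) : w x ≠ 0 := by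
  intro h
  exact hx (w.injective (by rw [h, w_zero hw]))

lemma w_abs_le (hw : w ∈ BGroup n) {x : ℤ} (hx : |x| ≤ (n:ℤ)) : |w x| ≤ (n:ℤ) := by
  by_contra h
  push_neg at h
  have h2 : w (w x) = w x := hw.2 _ h
  have h3 : w x = x := w.injective h2
  rw [h3] at h
  omega

lemma w_window (hw : w ∈ BGroup n) {x : ℤ} (h1 : 1 ≤ x) (h2 : x ≤ (n:ℤ)) :
    1 ≤ |w x| ∧ |w x| ≤ (n:ℤ) := by
  have h0 : w x ≠ 0 := w_ne_zero hw (by omega)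
  have h3 : |w x| ≤ (n:ℤ) := w_abs_le hw (by rw [abs_of_nonneg (by omega : (0:ℤ) ≤ x)]; omega)
  exact ⟨by rcases abs_cases (w x) with ⟨h,_⟩|⟨h,_⟩ <;> omega, h3⟩

/-- key counting fact: the entries of a signed permutation have pairwise distinct
absolute values forming `[1, n]`, so exactly `m - 1` window entries are `< m` in absolute value -/
lemma count_abs_lt (hw : w ∈ BGroup n) {m : ℤ} (hm1 : 1 ≤ m) (hm2 : m ≤ (n:ℤ)) :
    ∑ k ∈ Finset.Icc (1:ℤ) (n:ℤ), ind (-m < w k ∧ w k < m) = m - 1 := by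
  have hcard : ((Finset.Icc (1:ℤ) (n:ℤ)).filter (fun k => -m < w k ∧ w k < m)).card
      = (Finset.Icc (1:ℤ) (m-1)).card := by
    apply Finset.card_bij (fun k _ => |w k|)
    · intro a ha
      simp only [Finset.mem_filter, Finset.mem_Icc] at ha ⊢
      have h0 : w a ≠ 0 := w_ne_zero hw (by omega)
      rcases abs_cases (w a) with ⟨h,_⟩|⟨h,_⟩ <;> omega
    · intro a ha b hb hab
      simp only [Finset.mem_filter, Finset.mem_Icc] at ha hb
      rcases abs_cases (w a) with ⟨h4,_⟩|⟨h4,_⟩ <;> rcases abs_cases (w b) with ⟨h5,_⟩|⟨h5,_⟩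
      · exact w.injective (by omega)
      · have h6 : w a = w (-b) := by rw [w_neg hw]; omega
        have := w.injective h6; omega
      · have h6 : w a = w (-b) := by rw [w_neg hw]; omega
        have := w.injective h6; omega
      · exact w.injective (by omega)
    · intro q hq
      simp only [Finset.mem_Icc] at hq
      have hwx : w (w.symm q) = q := w.apply_symm_apply q
      set x := w.symm q with hxdef
      have hx0 : x ≠ 0 := by
        intro h; rw [h, w_zero hw] at hwx; omega
      have hxn : |x| ≤ (n:ℤ) := by
        by_contra h
        push_neg at h
        have h2 := hw.2 x h
        rw [h2] at hwx
        rcases abs_cases x with ⟨h3,_⟩|⟨h3,_⟩ <;> omega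
      have habs : w |x| = q ∨ w |x| = -q := by
        rcases abs_cases x with ⟨h3,_⟩|⟨h3,_⟩
        · left; rw [h3]; exact hwx
        · right; rw [h3, w_neg hw, hwx]
      refine ⟨|x|, ?_, ?_⟩
      · simp only [Finset.mem_filter, Finset.mem_Icc]
        refine ⟨⟨?_, hxn⟩, ?_⟩
        · rcases abs_cases x with ⟨h3,_⟩|⟨h3,_⟩ <;> omega
        · rcases habs with h4|h4 <;> rw [h4] <;> constructor <;> omega
      · rcases habs with h4|h4 <;> rw [h4]
        · exact abs_of_nonneg (by omega)
        · rw [abs_neg]; exact abs_of_nonneg (by omega)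
  have hsum : ∑ k ∈ Finset.Icc (1:ℤ) (n:ℤ), ind (-m < w k ∧ w k < m)
      = (((Finset.Icc (1:ℤ) (n:ℤ)).filter (fun k => -m < w k ∧ w k < m)).card : ℤ) := by
    rw [Finset.card_filter, Nat.cast_sum]
    apply Finset.sum_congr rfl
    intro k _
    unfold ind
    split_ifs <;> simp
  rw [hsum, hcard, Int.card_Icc]
  have he : (m - 1 + 1 - 1 : ℤ) = m - 1 := by ring
  rw [he, Int.toNat_of_nonneg (by omega)]

lemma disj_of (s t : Finset ℤ) (h : ∀ x, x ∈ s → x ∈ t → False) : Disjoint s t := by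
  rw [Finset.disjoint_left]; intro a ha hb; exact h a ha hb

lemma sum_split2 (n : ℕ) {i j : ℤ} (h1 : 1 ≤ i) (hij : i < j) (hjn : j ≤ (n:ℤ)) (f : ℤ → ℤ) :
    ∑ k ∈ Finset.Icc (1:ℤ) (n:ℤ), f k
      = (∑ k ∈ Finset.Ico 1 i, f k) + f i + (∑ k ∈ Finset.Ioo i j, f k) + f j
        + (∑ k ∈ Finset.Ioc j (n:ℤ), f k) := by
  have e : Finset.Icc (1:ℤ) (n:ℤ)
      = ((Finset.Ico (1:ℤ) i ∪ {i}) ∪ (Finset.Ioo i j ∪ {j})) ∪ Finset.Ioc j (n:ℤ) := by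
    ext x
    simp only [Finset.mem_Icc, Finset.mem_union, Finset.mem_Ico, Finset.mem_Ioo,
      Finset.mem_Ioc, Finset.mem_singleton]
    omega
  rw [e, Finset.sum_union (disj_of _ _ (by
        intro x hx hy
        simp only [Finset.mem_union, Finset.mem_Ico, Finset.mem_Ioo, Finset.mem_Ioc,
          Finset.mem_singleton] at hx hy
        omega)),
    Finset.sum_union (disj_of _ _ (by
        intro x hx hy
        simp only [Finset.mem_union, Finset.mem_Ico, Finset.mem_Ioo, Finset.mem_Ioc,
          Finset.mem_singleton] at hx hy
        omega)),
    Finset.sum_union (disj_of _ _ (by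
        intro x hx hy
        simp only [Finset.mem_Ico, Finset.mem_singleton] at hx hy
        omega)),
    Finset.sum_union (disj_of _ _ (by
        intro x hx hy
        simp only [Finset.mem_Ioo, Finset.mem_singleton] at hx hy
        omega)),
    Finset.sum_singleton, Finset.sum_singleton]
  ring

lemma sum_split1 (n : ℕ) {i : ℤ} (h1 : 1 ≤ i) (hin : i ≤ (n:ℤ)) (f : ℤ → ℤ) :
    ∑ k ∈ Finset.Icc (1:ℤ) (n:ℤ), f k
      = (∑ k ∈ Finset.Ico 1 i, f k) + f i + (∑ k ∈ Finset.Ioc i (n:ℤ), f k) := by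
  have e : Finset.Icc (1:ℤ) (n:ℤ)
      = (Finset.Ico (1:ℤ) i ∪ {i}) ∪ Finset.Ioc i (n:ℤ) := by
    ext x
    simp only [Finset.mem_Icc, Finset.mem_union, Finset.mem_Ico, Finset.mem_Ioc,
      Finset.mem_singleton]
    omega
  rw [e, Finset.sum_union (disj_of _ _ (by
        intro x hx hy
        simp only [Finset.mem_union, Finset.mem_Ico, Finset.mem_Ioc,
          Finset.mem_singleton] at hx hy
        omega)),
    Finset.sum_union (disj_of _ _ (by
        intro x hx hy
        simp only [Finset.mem_Ico, Finset.mem_singleton] at hx hy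
        omega)),
    Finset.sum_singleton]
  try ring

lemma double_sum2 {s : Finset ℤ} {i j : ℤ} (hi : i ∈ s) (hj : j ∈ s) (hij : i ≠ j)
    (F : ℤ → ℤ → ℤ) (h0 : ∀ x ∈ s, ∀ y ∈ s, x ≠ i → x ≠ j → y ≠ i → y ≠ j → F x y = 0) :
    ∑ x ∈ s, ∑ y ∈ s, F x y =
      (∑ k ∈ (s.erase i).erase j, (F k i + F k j + F i k + F j k))
        + (F i i + F i j + F j i + F j j) := by
  have hs : s = insert i (insert j ((s.erase i).erase j)) := by
    ext x
    simp only [Finset.mem_insert, Finset.mem_erase]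
    constructor
    · intro hx
      by_cases hx1 : x = i
      · exact Or.inl hx1
      · by_cases hx2 : x = j
        · exact Or.inr (Or.inl hx2)
        · exact Or.inr (Or.inr ⟨hx2, hx1, hx⟩)
    · rintro (rfl | rfl | ⟨_, _, hx⟩) <;> first | exact hi | exact hj | exact hx
  set Q := (s.erase i).erase j with hQdef
  have hn1 : i ∉ insert j Q := by simp [hQdef, hij]
  have hn2 : j ∉ Q := by simp [hQdef]
  have hz : ∀ x ∈ Q, ∑ y ∈ Q, F x y = 0 := by
    intro x hx
    apply Finset.sum_eq_zero
    intro y hy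
    rw [hQdef] at hx hy
    simp only [Finset.mem_erase] at hx hy
    exact h0 x hx.2.2 y hy.2.2 hx.2.1 hx.1 hy.2.1 hy.1
  have inner : ∀ x, ∑ y ∈ s, F x y = F x i + F x j + ∑ y ∈ Q, F x y := by
    intro x
    rw [hs, Finset.sum_insert hn1, Finset.sum_insert hn2]
    ring
  have step1 : ∑ x ∈ s, ∑ y ∈ s, F x y
      = ∑ x ∈ s, (F x i + F x j + ∑ y ∈ Q, F x y) :=
    Finset.sum_congr rfl (fun x _ => inner x)
  have step2 : ∑ x ∈ Q, (F x i + F x j + ∑ y ∈ Q, F x y)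
      = ∑ x ∈ Q, (F x i + F x j) :=
    Finset.sum_congr rfl (fun x hx => by rw [hz x hx, add_zero])
  have step3 : ∑ k ∈ Q, (F k i + F k j + F i k + F j k)
      = ∑ k ∈ Q, (F k i + F k j) + (∑ k ∈ Q, F i k) + (∑ k ∈ Q, F j k) := by
    rw [← Finset.sum_add_distrib, ← Finset.sum_add_distrib]
  rw [step1, hs, Finset.sum_insert hn1, Finset.sum_insert hn2, step2, step3]
  try ring

lemma double_sum1 {s : Finset ℤ} {i : ℤ} (hi : i ∈ s)
    (F : ℤ → ℤ → ℤ) (h0 : ∀ x ∈ s, ∀ y ∈ s, x ≠ i → y ≠ i → F x y = 0) :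
    ∑ x ∈ s, ∑ y ∈ s, F x y =
      (∑ k ∈ s.erase i, (F k i + F i k)) + F i i := by
  have hs : s = insert i (s.erase i) := by
    ext x
    simp only [Finset.mem_insert, Finset.mem_erase]
    constructor
    · intro hx
      by_cases hx1 : x = i
      · exact Or.inl hx1
      · exact Or.inr ⟨hx1, hx⟩
    · rintro (rfl | ⟨_, hx⟩) <;> first | exact hi | exact hx
  set Q := s.erase i with hQdef
  have hn1 : i ∉ Q := by simp [hQdef]
  have hz : ∀ x ∈ Q, ∑ y ∈ Q, F x y = 0 := by
    intro x hx
    apply Finset.sum_eq_zero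
    intro y hy
    rw [hQdef] at hx hy
    simp only [Finset.mem_erase] at hx hy
    exact h0 x hx.2 y hy.2 hx.1 hy.1
  have inner : ∀ x, ∑ y ∈ s, F x y = F x i + ∑ y ∈ Q, F x y := by
    intro x
    rw [hs, Finset.sum_insert hn1]
  have step1 : ∑ x ∈ s, ∑ y ∈ s, F x y
      = ∑ x ∈ s, (F x i + ∑ y ∈ Q, F x y) :=
    Finset.sum_congr rfl (fun x _ => inner x)
  have step2 : ∑ x ∈ Q, (F x i + ∑ y ∈ Q, F x y) = ∑ x ∈ Q, F x i :=
    Finset.sum_congr rfl (fun x hx => by rw [hz x hx, add_zero])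
  have step3 : ∑ k ∈ Q, (F k i + F i k)
      = ∑ k ∈ Q, F k i + (∑ k ∈ Q, F i k) := by
    rw [← Finset.sum_add_distrib]
  rw [step1, hs, Finset.sum_insert hn1, step2, step3]
  try ring

end
end AuxLen
namespace AuxLen
noncomputable section
open scoped Classical
open Finset

lemma diffA (n : ℕ) (w v : Equiv.Perm ℤ) {i j : ℤ} (h1 : 1 ≤ i) (hij : i < j) (hjn : j ≤ (n:ℤ))
    (hvw : ∀ k, 1 ≤ k → k ≤ (n:ℤ) → k ≠ i → k ≠ j → v k = w k)
    (hvi : v i = w j) (hvj : v j = w i) :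
    statB n w - statB n v
      = (ind (w j < w i) - ind (w i < w j))
        + ∑ k ∈ Finset.Ioo i j,
            ((ind (w k < w i) - ind (w k < w j)) + (ind (w j < w k) - ind (w i < w k))) := by
  have hi : i ∈ Finset.Icc (1:ℤ) (n:ℤ) := by simp only [Finset.mem_Icc]; omega
  have hj : j ∈ Finset.Icc (1:ℤ) (n:ℤ) := by simp only [Finset.mem_Icc]; omega
  have hns : nsB n w - nsB n v = 0 := by
    unfold nsB
    rw [← Finset.sum_sub_distrib, sum_split2 n h1 hij hjn]
    have z : ∀ (s : Finset ℤ), (∀ k ∈ s, 1 ≤ k ∧ k ≤ (n:ℤ) ∧ k ≠ i ∧ k ≠ j) →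
        ∑ k ∈ s, (eta (w k) - eta (v k)) = 0 := by
      intro s hs
      apply Finset.sum_eq_zero
      intro k hk
      obtain ⟨a1,a2,a3,a4⟩ := hs k hk
      rw [hvw k a1 a2 a3 a4]; ring
    rw [z _ (by intro k hk; simp only [Finset.mem_Ico] at hk; omega),
        z _ (by intro k hk; simp only [Finset.mem_Ioo] at hk; omega),
        z _ (by intro k hk; simp only [Finset.mem_Ioc] at hk; omega),
        hvi, hvj]
    ring
  set F : ℤ → ℤ → ℤ := fun x y => ind (x < y ∧ w y < w x) - ind (x < y ∧ v y < v x) with hF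
  have hinv : invB n w - invB n v
      = ∑ x ∈ Finset.Icc (1:ℤ) (n:ℤ), ∑ y ∈ Finset.Icc (1:ℤ) (n:ℤ), F x y := by
    unfold invB
    rw [← Finset.sum_sub_distrib]
    apply Finset.sum_congr rfl
    intro x _
    rw [← Finset.sum_sub_distrib]
  have h0 : ∀ x ∈ Finset.Icc (1:ℤ) (n:ℤ), ∀ y ∈ Finset.Icc (1:ℤ) (n:ℤ),
      x ≠ i → x ≠ j → y ≠ i → y ≠ j → F x y = 0 := by
    intro x hx y hy hx1 hx2 hy1 hy2
    simp only [Finset.mem_Icc] at hx hy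
    simp only [hF]
    rw [hvw x hx.1 hx.2 hx1 hx2, hvw y hy.1 hy.2 hy1 hy2]
    ring
  have key := double_sum2 hi hj (by omega) F h0
  have eQ : ((Finset.Icc (1:ℤ) (n:ℤ)).erase i).erase j
      = (Finset.Ico 1 i ∪ Finset.Ioo i j) ∪ Finset.Ioc j (n:ℤ) := by
    ext x
    simp only [Finset.mem_erase, Finset.mem_Icc, Finset.mem_union, Finset.mem_Ico,
      Finset.mem_Ioo, Finset.mem_Ioc]
    omega
  rw [eQ, Finset.sum_union (disj_of _ _ (by
      intro x hx hy
      simp only [Finset.mem_union, Finset.mem_Ico, Finset.mem_Ioo, Finset.mem_Ioc] at hx hy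
      omega)),
    Finset.sum_union (disj_of _ _ (by
      intro x hx hy
      simp only [Finset.mem_Ico, Finset.mem_Ioo] at hx hy
      omega))] at key
  have zL : ∑ k ∈ Finset.Ico 1 i, (F k i + F k j + F i k + F j k) = 0 := by
    apply Finset.sum_eq_zero
    intro k hk
    simp only [Finset.mem_Ico] at hk
    have hk3 : v k = w k := hvw k hk.1 (by omega) (by omega) (by omega)
    simp only [hF]
    rw [hvi, hvj, hk3,
      ind_and_left (show k < i by omega), ind_and_left (show k < i by omega),
      ind_and_left (show k < j by omega), ind_and_left (show k < j by omega),
      ind_and_false (show ¬ i < k by omega), ind_and_false (show ¬ i < k by omega),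
      ind_and_false (show ¬ j < k by omega), ind_and_false (show ¬ j < k by omega)]
    ring
  have zM : ∑ k ∈ Finset.Ioo i j, (F k i + F k j + F i k + F j k)
      = ∑ k ∈ Finset.Ioo i j,
          ((ind (w k < w i) - ind (w k < w j)) + (ind (w j < w k) - ind (w i < w k))) := by
    apply Finset.sum_congr rfl
    intro k hk
    simp only [Finset.mem_Ioo] at hk
    have hk3 : v k = w k := hvw k (by omega) (by omega) (by omega) (by omega)
    simp only [hF]
    rw [hvi, hvj, hk3,
      ind_and_false (show ¬ k < i by omega), ind_and_false (show ¬ k < i by omega),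
      ind_and_left (show k < j by omega), ind_and_left (show k < j by omega),
      ind_and_left (show i < k by omega), ind_and_left (show i < k by omega),
      ind_and_false (show ¬ j < k by omega), ind_and_false (show ¬ j < k by omega)]
    ring
  have zR : ∑ k ∈ Finset.Ioc j (n:ℤ), (F k i + F k j + F i k + F j k) = 0 := by
    apply Finset.sum_eq_zero
    intro k hk
    simp only [Finset.mem_Ioc] at hk
    have hk3 : v k = w k := hvw k (by omega) (by omega) (by omega) (by omega)
    simp only [hF]
    rw [hvi, hvj, hk3,
      ind_and_false (show ¬ k < i by omega), ind_and_false (show ¬ k < i by omega),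
      ind_and_false (show ¬ k < j by omega), ind_and_false (show ¬ k < j by omega),
      ind_and_left (show i < k by omega), ind_and_left (show i < k by omega),
      ind_and_left (show j < k by omega), ind_and_left (show j < k by omega)]
    ring
  have dii : F i i = 0 := by
    simp only [hF]
    rw [ind_and_false (lt_irrefl i), ind_and_false (lt_irrefl i)]
    ring
  have djj : F j j = 0 := by
    simp only [hF]
    rw [ind_and_false (lt_irrefl j), ind_and_false (lt_irrefl j)]
    ring
  have dji : F j i = 0 := by
    simp only [hF]
    rw [ind_and_false (show ¬ j < i by omega), ind_and_false (show ¬ j < i by omega)]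
    ring
  have dij : F i j = ind (w j < w i) - ind (w i < w j) := by
    simp only [hF]
    rw [hvi, hvj, ind_and_left hij, ind_and_left hij]
  have hsplit : statB n w - statB n v = (invB n w - invB n v) + (nsB n w - nsB n v) := by
    unfold statB; ring
  rw [hsplit, hns, hinv, key, zL, zM, zR, dii, djj, dji, dij]
  ring

lemma diffC (n : ℕ) (w v : Equiv.Perm ℤ) {i : ℤ} (h1 : 1 ≤ i) (hin : i ≤ (n:ℤ))
    (hvw : ∀ k, 1 ≤ k → k ≤ (n:ℤ) → k ≠ i → v k = w k)
    (hvi : v i = -(w i)) :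
    statB n w - statB n v
      = -(w i) + (∑ k ∈ Finset.Ico 1 i, (ind (w i < w k) - ind (-(w i) < w k)))
        + ∑ k ∈ Finset.Ioc i (n:ℤ), (ind (w k < w i) - ind (w k < -(w i))) := by
  have hi : i ∈ Finset.Icc (1:ℤ) (n:ℤ) := by simp only [Finset.mem_Icc]; omega
  have hns : nsB n w - nsB n v = -(w i) := by
    unfold nsB
    rw [← Finset.sum_sub_distrib, sum_split1 n h1 hin]
    have z : ∀ (s : Finset ℤ), (∀ k ∈ s, 1 ≤ k ∧ k ≤ (n:ℤ) ∧ k ≠ i) →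
        ∑ k ∈ s, (eta (w k) - eta (v k)) = 0 := by
      intro s hs
      apply Finset.sum_eq_zero
      intro k hk
      obtain ⟨a1,a2,a3⟩ := hs k hk
      rw [hvw k a1 a2 a3]; ring
    rw [z _ (by intro k hk; simp only [Finset.mem_Ico] at hk; omega),
        z _ (by intro k hk; simp only [Finset.mem_Ioc] at hk; omega),
        hvi]
    have := eta_pair (w i)
    omega
  set F : ℤ → ℤ → ℤ := fun x y => ind (x < y ∧ w y < w x) - ind (x < y ∧ v y < v x) with hF
  have hinv : invB n w - invB n v
      = ∑ x ∈ Finset.Icc (1:ℤ) (n:ℤ), ∑ y ∈ Finset.Icc (1:ℤ) (n:ℤ), F x y := by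
    unfold invB
    rw [← Finset.sum_sub_distrib]
    apply Finset.sum_congr rfl
    intro x _
    rw [← Finset.sum_sub_distrib]
  have h0 : ∀ x ∈ Finset.Icc (1:ℤ) (n:ℤ), ∀ y ∈ Finset.Icc (1:ℤ) (n:ℤ),
      x ≠ i → y ≠ i → F x y = 0 := by
    intro x hx y hy hx1 hy1
    simp only [Finset.mem_Icc] at hx hy
    simp only [hF]
    rw [hvw x hx.1 hx.2 hx1, hvw y hy.1 hy.2 hy1]
    ring
  have key := double_sum1 hi F h0
  have eQ : (Finset.Icc (1:ℤ) (n:ℤ)).erase i = Finset.Ico 1 i ∪ Finset.Ioc i (n:ℤ) := by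
    ext x
    simp only [Finset.mem_erase, Finset.mem_Icc, Finset.mem_union, Finset.mem_Ico,
      Finset.mem_Ioc]
    omega
  rw [eQ, Finset.sum_union (disj_of _ _ (by
      intro x hx hy
      simp only [Finset.mem_Ico, Finset.mem_Ioc] at hx hy
      omega))] at key
  have zL : ∑ k ∈ Finset.Ico 1 i, (F k i + F i k)
      = ∑ k ∈ Finset.Ico 1 i, (ind (w i < w k) - ind (-(w i) < w k)) := by
    apply Finset.sum_congr rfl
    intro k hk
    simp only [Finset.mem_Ico] at hk
    have hk3 : v k = w k := hvw k hk.1 (by omega) (by omega)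
    simp only [hF]
    rw [hvi, hk3,
      ind_and_left (show k < i by omega), ind_and_left (show k < i by omega),
      ind_and_false (show ¬ i < k by omega), ind_and_false (show ¬ i < k by omega)]
    ring
  have zR : ∑ k ∈ Finset.Ioc i (n:ℤ), (F k i + F i k)
      = ∑ k ∈ Finset.Ioc i (n:ℤ), (ind (w k < w i) - ind (w k < -(w i))) := by
    apply Finset.sum_congr rfl
    intro k hk
    simp only [Finset.mem_Ioc] at hk
    have hk3 : v k = w k := hvw k (by omega) (by omega) (by omega)
    simp only [hF]
    rw [hvi, hk3,
      ind_and_false (show ¬ k < i by omega), ind_and_false (show ¬ k < i by omega),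
      ind_and_left (show i < k by omega), ind_and_left (show i < k by omega)]
    ring
  have dii : F i i = 0 := by
    simp only [hF]
    rw [ind_and_false (lt_irrefl i), ind_and_false (lt_irrefl i)]
    ring
  have hsplit : statB n w - statB n v = (invB n w - invB n v) + (nsB n w - nsB n v) := by
    unfold statB; ring
  rw [hsplit, hns, hinv, key, zL, zR, dii]
  ring

lemma diffB (n : ℕ) (w v : Equiv.Perm ℤ) {i j : ℤ} (h1 : 1 ≤ i) (hij : i < j) (hjn : j ≤ (n:ℤ))
    (hvw : ∀ k, 1 ≤ k → k ≤ (n:ℤ) → k ≠ i → k ≠ j → v k = w k)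
    (hvi : v i = -(w j)) (hvj : v j = -(w i)) :
    statB n w - statB n v
      = (-(w i) - w j)
        + (∑ k ∈ Finset.Ico 1 i, ((ind (w i < w k) - ind (-(w i) < w k))
            + (ind (w j < w k) - ind (-(w j) < w k))))
        + (∑ k ∈ Finset.Ioo i j, ((ind (w k < w i) - ind (w k < -(w j)))
            + (ind (w j < w k) - ind (-(w i) < w k))))
        + (∑ k ∈ Finset.Ioc j (n:ℤ), ((ind (w k < w i) - ind (w k < -(w i)))
            + (ind (w k < w j) - ind (w k < -(w j))))) := by
  have hi : i ∈ Finset.Icc (1:ℤ) (n:ℤ) := by simp only [Finset.mem_Icc]; omega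
  have hj : j ∈ Finset.Icc (1:ℤ) (n:ℤ) := by simp only [Finset.mem_Icc]; omega
  have hns : nsB n w - nsB n v = -(w i) - w j := by
    unfold nsB
    rw [← Finset.sum_sub_distrib, sum_split2 n h1 hij hjn]
    have z : ∀ (s : Finset ℤ), (∀ k ∈ s, 1 ≤ k ∧ k ≤ (n:ℤ) ∧ k ≠ i ∧ k ≠ j) →
        ∑ k ∈ s, (eta (w k) - eta (v k)) = 0 := by
      intro s hs
      apply Finset.sum_eq_zero
      intro k hk
      obtain ⟨a1,a2,a3,a4⟩ := hs k hk
      rw [hvw k a1 a2 a3 a4]; ring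
    rw [z _ (by intro k hk; simp only [Finset.mem_Ico] at hk; omega),
        z _ (by intro k hk; simp only [Finset.mem_Ioo] at hk; omega),
        z _ (by intro k hk; simp only [Finset.mem_Ioc] at hk; omega),
        hvi, hvj]
    have e1 := eta_pair (w i)
    have e2 := eta_pair (w j)
    omega
  set F : ℤ → ℤ → ℤ := fun x y => ind (x < y ∧ w y < w x) - ind (x < y ∧ v y < v x) with hF
  have hinv : invB n w - invB n v
      = ∑ x ∈ Finset.Icc (1:ℤ) (n:ℤ), ∑ y ∈ Finset.Icc (1:ℤ) (n:ℤ), F x y := by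
    unfold invB
    rw [← Finset.sum_sub_distrib]
    apply Finset.sum_congr rfl
    intro x _
    rw [← Finset.sum_sub_distrib]
  have h0 : ∀ x ∈ Finset.Icc (1:ℤ) (n:ℤ), ∀ y ∈ Finset.Icc (1:ℤ) (n:ℤ),
      x ≠ i → x ≠ j → y ≠ i → y ≠ j → F x y = 0 := by
    intro x hx y hy hx1 hx2 hy1 hy2
    simp only [Finset.mem_Icc] at hx hy
    simp only [hF]
    rw [hvw x hx.1 hx.2 hx1 hx2, hvw y hy.1 hy.2 hy1 hy2]
    ring
  have key := double_sum2 hi hj (by omega) F h0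
  have eQ : ((Finset.Icc (1:ℤ) (n:ℤ)).erase i).erase j
      = (Finset.Ico 1 i ∪ Finset.Ioo i j) ∪ Finset.Ioc j (n:ℤ) := by
    ext x
    simp only [Finset.mem_erase, Finset.mem_Icc, Finset.mem_union, Finset.mem_Ico,
      Finset.mem_Ioo, Finset.mem_Ioc]
    omega
  rw [eQ, Finset.sum_union (disj_of _ _ (by
      intro x hx hy
      simp only [Finset.mem_union, Finset.mem_Ico, Finset.mem_Ioo, Finset.mem_Ioc] at hx hy
      omega)),
    Finset.sum_union (disj_of _ _ (by
      intro x hx hy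
      simp only [Finset.mem_Ico, Finset.mem_Ioo] at hx hy
      omega))] at key
  have zL : ∑ k ∈ Finset.Ico 1 i, (F k i + F k j + F i k + F j k)
      = ∑ k ∈ Finset.Ico 1 i, ((ind (w i < w k) - ind (-(w i) < w k))
          + (ind (w j < w k) - ind (-(w j) < w k))) := by
    apply Finset.sum_congr rfl
    intro k hk
    simp only [Finset.mem_Ico] at hk
    have hk3 : v k = w k := hvw k hk.1 (by omega) (by omega) (by omega)
    simp only [hF]
    rw [hvi, hvj, hk3,
      ind_and_left (show k < i by omega), ind_and_left (show k < i by omega),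
      ind_and_left (show k < j by omega), ind_and_left (show k < j by omega),
      ind_and_false (show ¬ i < k by omega), ind_and_false (show ¬ i < k by omega),
      ind_and_false (show ¬ j < k by omega), ind_and_false (show ¬ j < k by omega)]
    ring
  have zM : ∑ k ∈ Finset.Ioo i j, (F k i + F k j + F i k + F j k)
      = ∑ k ∈ Finset.Ioo i j, ((ind (w k < w i) - ind (w k < -(w j)))
          + (ind (w j < w k) - ind (-(w i) < w k))) := by
    apply Finset.sum_congr rfl
    intro k hk
    simp only [Finset.mem_Ioo] at hk
    have hk3 : v k = w k := hvw k (by omega) (by omega) (by omega) (by omega)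
    simp only [hF]
    rw [hvi, hvj, hk3,
      ind_and_false (show ¬ k < i by omega), ind_and_false (show ¬ k < i by omega),
      ind_and_left (show k < j by omega), ind_and_left (show k < j by omega),
      ind_and_left (show i < k by omega), ind_and_left (show i < k by omega),
      ind_and_false (show ¬ j < k by omega), ind_and_false (show ¬ j < k by omega)]
    ring
  have zR : ∑ k ∈ Finset.Ioc j (n:ℤ), (F k i + F k j + F i k + F j k)
      = ∑ k ∈ Finset.Ioc j (n:ℤ), ((ind (w k < w i) - ind (w k < -(w i)))
          + (ind (w k < w j) - ind (w k < -(w j)))) := by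
    apply Finset.sum_congr rfl
    intro k hk
    simp only [Finset.mem_Ioc] at hk
    have hk3 : v k = w k := hvw k (by omega) (by omega) (by omega) (by omega)
    simp only [hF]
    rw [hvi, hvj, hk3,
      ind_and_false (show ¬ k < i by omega), ind_and_false (show ¬ k < i by omega),
      ind_and_false (show ¬ k < j by omega), ind_and_false (show ¬ k < j by omega),
      ind_and_left (show i < k by omega), ind_and_left (show i < k by omega),
      ind_and_left (show j < k by omega), ind_and_left (show j < k by omega)]
    ring
  have dii : F i i = 0 := by
    simp only [hF]
    rw [ind_and_false (lt_irrefl i), ind_and_false (lt_irrefl i)]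
    ring
  have djj : F j j = 0 := by
    simp only [hF]
    rw [ind_and_false (lt_irrefl j), ind_and_false (lt_irrefl j)]
    ring
  have dji : F j i = 0 := by
    simp only [hF]
    rw [ind_and_false (show ¬ j < i by omega), ind_and_false (show ¬ j < i by omega)]
    ring
  have dij : F i j = 0 := by
    simp only [hF]
    rw [hvi, hvj, ind_and_left hij, ind_and_left hij]
    unfold ind
    split_ifs <;> omega
  have hsplit : statB n w - statB n v = (invB n w - invB n v) + (nsB n w - nsB n v) := by
    unfold statB; ring
  rw [hsplit, hns, hinv, key, zL, zM, zR, dii, djj, dji, dij]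
  ring

end
end AuxLen
namespace AuxLen
noncomputable section
open scoped Classical
open Finset

lemma sum_ind_eq_card_iff (s : Finset ℤ) (p : ℤ → Prop) {c : ℤ} (hc : (s.card : ℤ) = c) :
    (∑ k ∈ s, ind (p k)) = c ↔ ∀ k ∈ s, p k := by
  constructor
  · intro h
    have hle : ∀ k ∈ s, ind (p k) ≤ 1 := fun k _ => ind_le_one _
    have hsum : ∑ k ∈ s, ind (p k) = ∑ k ∈ s, (1:ℤ) := by
      rw [Finset.sum_const, nsmul_eq_mul, mul_one, hc, h]
    intro k hk
    have h2 := (Finset.sum_eq_sum_iff_of_le hle).mp hsum k hk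
    by_contra hp
    rw [ind_false hp] at h2
    omega
  · intro h
    have h2 : ∀ k ∈ s, ind (p k) = 1 := fun k hk => ind_true (h k hk)
    rw [Finset.sum_congr rfl h2, Finset.sum_const, nsmul_eq_mul, mul_one, hc]

lemma sum_ind_eq_zero_iff (s : Finset ℤ) (p : ℤ → Prop) :
    (∑ k ∈ s, ind (p k)) = 0 ↔ ∀ k ∈ s, ¬ p k := by
  constructor
  · intro h k hk hp
    have h0 : ∀ x ∈ s, 0 ≤ ind (p x) := fun x _ => ind_nonneg _
    have h2 := (Finset.sum_eq_zero_iff_of_nonneg h0).mp h k hk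
    rw [ind_true hp] at h2
    omega
  · intro h
    exact Finset.sum_eq_zero fun k hk => ind_false (h k hk)

lemma sum_ind_nonneg (s : Finset ℤ) (p : ℤ → Prop) : 0 ≤ ∑ k ∈ s, ind (p k) :=
  Finset.sum_nonneg fun k _ => ind_nonneg _

lemma sum_ind_le_card (s : Finset ℤ) (p : ℤ → Prop) {c : ℤ} (hc : (s.card : ℤ) = c) :
    (∑ k ∈ s, ind (p k)) ≤ c := by
  calc (∑ k ∈ s, ind (p k)) ≤ ∑ k ∈ s, (1:ℤ) := Finset.sum_le_sum fun k _ => ind_le_one _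
  _ = c := by rw [Finset.sum_const, nsmul_eq_mul, mul_one, hc]

lemma card_Ico' {a b : ℤ} (h : a ≤ b) : ((Finset.Ico a b).card : ℤ) = b - a := by
  rw [Int.card_Ico, Int.toNat_of_nonneg (by omega)]

lemma card_Ioo' {a b : ℤ} (h : a < b) : ((Finset.Ioo a b).card : ℤ) = b - a - 1 := by
  rw [Int.card_Ioo, Int.toNat_of_nonneg (by omega)]

lemma iffA (n : ℕ) (w v : Equiv.Perm ℤ) {i j : ℤ} (h1 : 1 ≤ i) (hij : i < j) (hjn : j ≤ (n:ℤ))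
    (hvw : ∀ k, 1 ≤ k → k ≤ (n:ℤ) → k ≠ i → k ≠ j → v k = w k)
    (hvi : v i = w j) (hvj : v j = w i) :
    statB n w - statB n v = 2*(j-i) - 1 ↔
      (w j < w i ∧ ∀ k : ℤ, i < k → k < j → w k < w i ∧ w j < w k) := by
  have hD := diffA n w v h1 hij hjn hvw hvi hvj
  have hji : w i ≠ w j := fun h => by have := w.injective h; omega
  have hcard : ((Finset.Ioo i j).card : ℤ) = j - i - 1 := card_Ioo' hij
  have hT1 : ind (w j < w i) - ind (w i < w j) ≤ 1 := by
    unfold ind; split_ifs <;> omega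
  have hTiff : ind (w j < w i) - ind (w i < w j) = 1 ↔ w j < w i := by
    unfold ind; split_ifs <;> omega
  have hgle : ∀ k ∈ Finset.Ioo i j,
      (ind (w k < w i) - ind (w k < w j)) + (ind (w j < w k) - ind (w i < w k)) ≤ 2 := by
    intro k hk
    unfold ind; split_ifs <;> omega
  have hsum_le : ∑ k ∈ Finset.Ioo i j,
      ((ind (w k < w i) - ind (w k < w j)) + (ind (w j < w k) - ind (w i < w k)))
        ≤ 2*(j-i-1) := by
    calc _ ≤ ∑ _k ∈ Finset.Ioo i j, (2:ℤ) := Finset.sum_le_sum hgle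
    _ = 2*(j-i-1) := by rw [Finset.sum_const, nsmul_eq_mul, hcard]; ring
  constructor
  · intro h
    have hTe : ind (w j < w i) - ind (w i < w j) = 1 := by omega
    have hsum_eq : ∑ k ∈ Finset.Ioo i j,
        ((ind (w k < w i) - ind (w k < w j)) + (ind (w j < w k) - ind (w i < w k)))
          = ∑ _k ∈ Finset.Ioo i j, (2:ℤ) := by
      have h2 : ∑ _k ∈ Finset.Ioo i j, (2:ℤ) = 2*(j-i-1) := by
        rw [Finset.sum_const, nsmul_eq_mul, hcard]; ring
      omega
    have hall := (Finset.sum_eq_sum_iff_of_le hgle).mp hsum_eq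
    refine ⟨hTiff.mp hTe, ?_⟩
    intro k hk1 hk2
    have hgk := hall k (by simp only [Finset.mem_Ioo]; exact ⟨hk1, hk2⟩)
    have ne1 : w k ≠ w i := fun h' => by have := w.injective h'; omega
    have ne2 : w k ≠ w j := fun h' => by have := w.injective h'; omega
    unfold ind at hgk
    split_ifs at hgk <;> omega
  · rintro ⟨hwji, hcond⟩
    have hTe : ind (w j < w i) - ind (w i < w j) = 1 := hTiff.mpr hwji
    have hsum_eq : ∑ k ∈ Finset.Ioo i j,
        ((ind (w k < w i) - ind (w k < w j)) + (ind (w j < w k) - ind (w i < w k)))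
          = 2*(j-i-1) := by
      have h2 : ∀ k ∈ Finset.Ioo i j,
          (ind (w k < w i) - ind (w k < w j)) + (ind (w j < w k) - ind (w i < w k)) = 2 := by
        intro k hk
        simp only [Finset.mem_Ioo] at hk
        obtain ⟨c1, c2⟩ := hcond k hk.1 hk.2
        unfold ind; split_ifs <;> omega
      rw [Finset.sum_congr rfl h2, Finset.sum_const, nsmul_eq_mul, hcard]; ring
    omega

variable {n : ℕ} {w : Equiv.Perm ℤ}

lemma evalC_neg (hw : w ∈ BGroup n) (v : Equiv.Perm ℤ) {i : ℤ} (h1 : 1 ≤ i) (hin : i ≤ (n:ℤ))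
    (hvw : ∀ k, 1 ≤ k → k ≤ (n:ℤ) → k ≠ i → v k = w k)
    (hvi : v i = -(w i)) (ha : w i < 0) :
    statB n w - statB n v
      = 2 * (∑ k ∈ Finset.Ico 1 i, ind (w i < w k ∧ w k < -(w i))) + 1 := by
  have hD := diffC n w v h1 hin hvw hvi
  have hm := w_window hw h1 hin
  have hmi : |w i| = -(w i) := abs_of_neg ha
  have neI : ∀ k, 1 ≤ k → k ≤ (n:ℤ) → k ≠ i → w k ≠ w i ∧ w k ≠ -(w i) := by
    intro k hk1 hk2 hki
    constructor
    · intro h; have := w.injective h; omega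
    · intro h
      have h2 : w k = w (-i) := by rw [w_neg hw]; omega
      have := w.injective h2; omega
  have zL : ∑ k ∈ Finset.Ico 1 i, (ind (w i < w k) - ind (-(w i) < w k))
      = ∑ k ∈ Finset.Ico 1 i, ind (w i < w k ∧ w k < -(w i)) := by
    apply Finset.sum_congr rfl
    intro k hk
    simp only [Finset.mem_Ico] at hk
    obtain ⟨ne1, ne2⟩ := neI k hk.1 (by omega) (by omega)
    unfold ind; split_ifs <;> omega
  have zR : ∑ k ∈ Finset.Ioc i (n:ℤ), (ind (w k < w i) - ind (w k < -(w i)))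
      = -∑ k ∈ Finset.Ioc i (n:ℤ), ind (w i < w k ∧ w k < -(w i)) := by
    rw [← Finset.sum_neg_distrib]
    apply Finset.sum_congr rfl
    intro k hk
    simp only [Finset.mem_Ioc] at hk
    obtain ⟨ne1, ne2⟩ := neI k (by omega) hk.2 (by omega)
    unfold ind; split_ifs <;> omega
  have hcnt := count_abs_lt hw (show (1:ℤ) ≤ -(w i) by omega) (show -(w i) ≤ (n:ℤ) by omega)
  rw [sum_split1 n h1 hin] at hcnt
  simp only [neg_neg] at hcnt
  rw [ind_false (show ¬(w i < w i ∧ w i < -(w i)) by omega)] at hcnt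
  rw [zL, zR] at hD
  omega

lemma evalC_pos (hw : w ∈ BGroup n) (v : Equiv.Perm ℤ) {i : ℤ} (h1 : 1 ≤ i) (hin : i ≤ (n:ℤ))
    (hvw : ∀ k, 1 ≤ k → k ≤ (n:ℤ) → k ≠ i → v k = w k)
    (hvi : v i = -(w i)) (ha : 0 < w i) :
    statB n w - statB n v
      = -(2 * (∑ k ∈ Finset.Ico 1 i, ind (-(w i) < w k ∧ w k < w i))) - 1 := by
  have hD := diffC n w v h1 hin hvw hvi
  have hm := w_window hw h1 hin
  have hmi : |w i| = w i := abs_of_pos ha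
  have neI : ∀ k, 1 ≤ k → k ≤ (n:ℤ) → k ≠ i → w k ≠ w i ∧ w k ≠ -(w i) := by
    intro k hk1 hk2 hki
    constructor
    · intro h; have := w.injective h; omega
    · intro h
      have h2 : w k = w (-i) := by rw [w_neg hw]; omega
      have := w.injective h2; omega
  have zL : ∑ k ∈ Finset.Ico 1 i, (ind (w i < w k) - ind (-(w i) < w k))
      = -∑ k ∈ Finset.Ico 1 i, ind (-(w i) < w k ∧ w k < w i) := by
    rw [← Finset.sum_neg_distrib]
    apply Finset.sum_congr rfl
    intro k hk
    simp only [Finset.mem_Ico] at hk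
    obtain ⟨ne1, ne2⟩ := neI k hk.1 (by omega) (by omega)
    unfold ind; split_ifs <;> omega
  have zR : ∑ k ∈ Finset.Ioc i (n:ℤ), (ind (w k < w i) - ind (w k < -(w i)))
      = ∑ k ∈ Finset.Ioc i (n:ℤ), ind (-(w i) < w k ∧ w k < w i) := by
    apply Finset.sum_congr rfl
    intro k hk
    simp only [Finset.mem_Ioc] at hk
    obtain ⟨ne1, ne2⟩ := neI k (by omega) hk.2 (by omega)
    unfold ind; split_ifs <;> omega
  have hcnt := count_abs_lt hw (show (1:ℤ) ≤ w i by omega) (show w i ≤ (n:ℤ) by omega)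
  rw [sum_split1 n h1 hin] at hcnt
  rw [ind_false (show ¬(-(w i) < w i ∧ w i < w i) by omega)] at hcnt
  rw [zL, zR] at hD
  omega

lemma iffC (hw : w ∈ BGroup n) (v : Equiv.Perm ℤ) {i : ℤ} (h1 : 1 ≤ i) (hin : i ≤ (n:ℤ))
    (hvw : ∀ k, 1 ≤ k → k ≤ (n:ℤ) → k ≠ i → v k = w k)
    (hvi : v i = -(w i)) :
    statB n w - statB n v = 2*i - 1 ↔
      (w i < 0 ∧ ∀ k : ℤ, 1 ≤ k → k < i → |w k| < |w i|) := by
  have hne0 : w i ≠ 0 := w_ne_zero hw (by omega)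
  have hcard : ((Finset.Ico (1:ℤ) i).card : ℤ) = i - 1 := card_Ico' h1
  rcases lt_or_gt_of_ne hne0 with ha|ha
  · rw [evalC_neg hw v h1 hin hvw hvi ha]
    have hiff := sum_ind_eq_card_iff (Finset.Ico (1:ℤ) i)
      (fun k => w i < w k ∧ w k < -(w i)) hcard
    have hle := sum_ind_le_card (Finset.Ico (1:ℤ) i)
      (fun k => w i < w k ∧ w k < -(w i)) hcard
    beta_reduce at hiff hle
    constructor
    · intro h
      refine ⟨ha, ?_⟩
      intro k hk1 hk2
      have hall := hiff.mp (by omega)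
      have hk := hall k (by simp only [Finset.mem_Ico]; omega)
      rw [abs_lt, abs_of_neg ha]
      constructor <;> omega
    · rintro ⟨_, hcond⟩
      have hall : ∀ k ∈ Finset.Ico (1:ℤ) i, w i < w k ∧ w k < -(w i) := by
        intro k hk
        simp only [Finset.mem_Ico] at hk
        have h2 := hcond k hk.1 hk.2
        rw [abs_lt, abs_of_neg ha] at h2
        constructor <;> omega
      have := hiff.mpr hall
      omega
  · rw [evalC_pos hw v h1 hin hvw hvi ha]
    have hA0 := sum_ind_nonneg (Finset.Ico (1:ℤ) i) (fun k => -(w i) < w k ∧ w k < w i)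
    beta_reduce at hA0
    constructor
    · intro h; exfalso; omega
    · rintro ⟨hneg, _⟩; omega

end
end AuxLen
namespace AuxLen
noncomputable section
open scoped Classical
open Finset

variable {n : ℕ} {w : Equiv.Perm ℤ}

lemma pair_neg {a c : ℤ} (ha : a < 0) (h1 : c ≠ a) (h2 : c ≠ -a) :
    ind (a < c) - ind (-a < c) = ind (a < c ∧ c < -a) := by
  unfold ind; split_ifs <;> omega

lemma pair_neg' {a c : ℤ} (ha : a < 0) (h1 : c ≠ a) (h2 : c ≠ -a) :
    ind (c < a) - ind (c < -a) = -ind (a < c ∧ c < -a) := by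
  unfold ind; split_ifs <;> omega

lemma pair_pos {a c : ℤ} (ha : 0 < a) (h1 : c ≠ a) (h2 : c ≠ -a) :
    ind (a < c) - ind (-a < c) = -ind (-a < c ∧ c < a) := by
  unfold ind; split_ifs <;> omega

lemma pair_pos' {a c : ℤ} (ha : 0 < a) (h1 : c ≠ a) (h2 : c ≠ -a) :
    ind (c < a) - ind (c < -a) = ind (-a < c ∧ c < a) := by
  unfold ind; split_ifs <;> omega

lemma midB_eq_gt {a b c : ℤ} (ha : a < 0) (hb : b < 0) (hord : b < a)
    (h1 : c ≠ a) (h2 : c ≠ -a) (h3 : c ≠ b) (h4 : c ≠ -b) :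
    (ind (c < a) - ind (c < -b)) + (ind (b < c) - ind (-a < c))
      = ind (b < c ∧ c < -b) - ind (a < c ∧ c < -a) - 2 * ind (-a < c ∧ c < -b) := by
  unfold ind; split_ifs <;> omega

lemma midB_eq_lt {a b c : ℤ} (ha : a < 0) (hb : b < 0) (hord : a < b)
    (h1 : c ≠ a) (h2 : c ≠ -a) (h3 : c ≠ b) (h4 : c ≠ -b) :
    (ind (c < a) - ind (c < -b)) + (ind (b < c) - ind (-a < c))
      = ind (a < c ∧ c < -a) - ind (b < c ∧ c < -b) - 2 * ind (a < c ∧ c < b) := by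
  unfold ind; split_ifs <;> omega

lemma midB_le1 {a b c : ℤ} (ha : a < 0) (hb : 0 < b)
    (h1 : c ≠ a) (h2 : c ≠ -a) (h3 : c ≠ b) (h4 : c ≠ -b) :
    (ind (c < a) - ind (c < -b)) + (ind (b < c) - ind (-a < c))
      ≤ ind (a < c ∧ c < -a) + ind (-b < c ∧ c < b) := by
  unfold ind; split_ifs <;> omega

lemma midB_le2 {a b c : ℤ} (ha : 0 < a) (hb : b < 0)
    (h1 : c ≠ a) (h2 : c ≠ -a) (h3 : c ≠ b) (h4 : c ≠ -b) :
    (ind (c < a) - ind (c < -b)) + (ind (b < c) - ind (-a < c))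
      ≤ ind (-a < c ∧ c < a) + ind (b < c ∧ c < -b) := by
  unfold ind; split_ifs <;> omega

lemma midB_le3 {a b c : ℤ} (ha : 0 < a) (hb : 0 < b)
    (h1 : c ≠ a) (h2 : c ≠ -a) (h3 : c ≠ b) (h4 : c ≠ -b) :
    (ind (c < a) - ind (c < -b)) + (ind (b < c) - ind (-a < c))
      ≤ ind (-a < c ∧ c < a) + ind (-b < c ∧ c < b) := by
  unfold ind; split_ifs <;> omega

set_option maxHeartbeats 1000000 in
lemma iffB (hw : w ∈ BGroup n) (v : Equiv.Perm ℤ) {i j : ℤ} (h1 : 1 ≤ i) (hij : i < j)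
    (hjn : j ≤ (n:ℤ))
    (hvw : ∀ k, 1 ≤ k → k ≤ (n:ℤ) → k ≠ i → k ≠ j → v k = w k)
    (hvi : v i = -(w j)) (hvj : v j = -(w i)) :
    statB n w - statB n v = 2*(i+j) - 3 ↔
      (w i < 0 ∧ w j < 0 ∧
        (∀ k : ℤ, 1 ≤ k → k < i → w i < w k ∧ w k + w j < 0) ∧
        (∀ k : ℤ, k ≠ i → 1 ≤ k → k < j → w j < w k ∧ w i + w k < 0)) := by
  have hD := diffB n w v h1 hij hjn hvw hvi hvj
  have hwi0 : w i ≠ 0 := w_ne_zero hw (by omega)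
  have hwj0 : w j ≠ 0 := w_ne_zero hw (by omega)
  have hwin_i := w_window hw h1 (by omega)
  have hwin_j := w_window hw (by omega : (1:ℤ) ≤ j) hjn
  have hNE : ∀ k, 1 ≤ k → k ≤ (n:ℤ) → k ≠ i → k ≠ j →
      (w k ≠ w i ∧ w k ≠ -(w i) ∧ w k ≠ w j ∧ w k ≠ -(w j)) := by
    intro k hk1 hk2 hki hkj
    refine ⟨fun h => ?_, fun h => ?_, fun h => ?_, fun h => ?_⟩
    · have := w.injective h; omega
    · have h2 : w k = w (-i) := by rw [w_neg hw]; omega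
      have := w.injective h2; omega
    · have := w.injective h; omega
    · have h2 : w k = w (-j) := by rw [w_neg hw]; omega
      have := w.injective h2; omega
  have hba1 : w j ≠ w i := fun h => by have := w.injective h; omega
  have hba2 : w j ≠ -(w i) := fun h => by
    have h2 : w j = w (-i) := by rw [w_neg hw]; omega
    have := w.injective h2; omega
  have cardL : ((Finset.Ico (1:ℤ) i).card : ℤ) = i - 1 := card_Ico' h1
  have cardM : ((Finset.Ioo i j).card : ℤ) = j - i - 1 := card_Ioo' hij
  rcases lt_or_gt_of_ne hwi0 with hai|hai
  · -- w i < 0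
    have hma : |w i| = -(w i) := abs_of_neg hai
    have cnta := count_abs_lt hw (show (1:ℤ) ≤ -(w i) by omega)
      (show -(w i) ≤ (n:ℤ) by omega)
    rw [sum_split2 n h1 hij hjn] at cnta
    simp only [neg_neg] at cnta
    rw [ind_false (show ¬(w i < w i ∧ w i < -(w i)) by omega)] at cnta
    -- zL and zR are the same in both sub-sign-cases of w j? No: they depend on sign of w j.
    rcases lt_or_gt_of_ne hwj0 with hbj|hbj
    · -- w j < 0 : the equality case
      have hmb : |w j| = -(w j) := abs_of_neg hbj
      have cntb := count_abs_lt hw (show (1:ℤ) ≤ -(w j) by omega)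
        (show -(w j) ≤ (n:ℤ) by omega)
      rw [sum_split2 n h1 hij hjn] at cntb
      simp only [neg_neg] at cntb
      rw [ind_false (show ¬(w j < w j ∧ w j < -(w j)) by omega)] at cntb
      have zL : ∑ k ∈ Finset.Ico 1 i, ((ind (w i < w k) - ind (-(w i) < w k))
            + (ind (w j < w k) - ind (-(w j) < w k)))
          = (∑ k ∈ Finset.Ico 1 i, ind (w i < w k ∧ w k < -(w i)))
            + ∑ k ∈ Finset.Ico 1 i, ind (w j < w k ∧ w k < -(w j)) := by
        rw [← Finset.sum_add_distrib]
        apply Finset.sum_congr rfl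
        intro k hk
        simp only [Finset.mem_Ico] at hk
        obtain ⟨n1,n2,n3,n4⟩ := hNE k hk.1 (by omega) (by omega) (by omega)
        rw [pair_neg hai n1 n2, pair_neg hbj n3 n4]
      have zR : ∑ k ∈ Finset.Ioc j (n:ℤ), ((ind (w k < w i) - ind (w k < -(w i)))
            + (ind (w k < w j) - ind (w k < -(w j))))
          = -((∑ k ∈ Finset.Ioc j (n:ℤ), ind (w i < w k ∧ w k < -(w i)))
            + ∑ k ∈ Finset.Ioc j (n:ℤ), ind (w j < w k ∧ w k < -(w j))) := by
        rw [← Finset.sum_add_distrib, ← Finset.sum_neg_distrib]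
        apply Finset.sum_congr rfl
        intro k hk
        simp only [Finset.mem_Ioc] at hk
        obtain ⟨n1,n2,n3,n4⟩ := hNE k (by omega) hk.2 (by omega) (by omega)
        rw [pair_neg' hai n1 n2, pair_neg' hbj n3 n4]
        ring
      have bndaL := sum_ind_le_card (Finset.Ico (1:ℤ) i)
        (fun k => w i < w k ∧ w k < -(w i)) cardL
      have bndbL := sum_ind_le_card (Finset.Ico (1:ℤ) i)
        (fun k => w j < w k ∧ w k < -(w j)) cardL
      have bndaM := sum_ind_le_card (Finset.Ioo i j)
        (fun k => w i < w k ∧ w k < -(w i)) cardM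
      have bndbM := sum_ind_le_card (Finset.Ioo i j)
        (fun k => w j < w k ∧ w k < -(w j)) cardM
      beta_reduce at bndaL bndbL bndaM bndbM
      have hiffaL := sum_ind_eq_card_iff (Finset.Ico (1:ℤ) i)
        (fun k => w i < w k ∧ w k < -(w i)) cardL
      have hiffbL := sum_ind_eq_card_iff (Finset.Ico (1:ℤ) i)
        (fun k => w j < w k ∧ w k < -(w j)) cardL
      have hiffaM := sum_ind_eq_card_iff (Finset.Ioo i j)
        (fun k => w i < w k ∧ w k < -(w i)) cardM
      have hiffbM := sum_ind_eq_card_iff (Finset.Ioo i j)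
        (fun k => w j < w k ∧ w k < -(w j)) cardM
      have hiffq1 := sum_ind_eq_zero_iff (Finset.Ioo i j) (fun k => w i < w k ∧ w k < w j)
      have hiffq2 := sum_ind_eq_zero_iff (Finset.Ioo i j)
        (fun k => -(w i) < w k ∧ w k < -(w j))
      have nnq1 := sum_ind_nonneg (Finset.Ioo i j) (fun k => w i < w k ∧ w k < w j)
      have nnq2 := sum_ind_nonneg (Finset.Ioo i j) (fun k => -(w i) < w k ∧ w k < -(w j))
      beta_reduce at hiffaL hiffbL hiffaM hiffbM hiffq1 hiffq2 nnq1 nnq2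
      rcases lt_or_gt_of_ne hba1 with hord|hord
      · -- w j < w i  (|w j| > |w i| is false... here |a| < |b|)
        rw [ind_false (show ¬(w i < w j ∧ w j < -(w i)) by omega)] at cnta
        rw [ind_true (show (w j < w i ∧ w i < -(w j)) by omega)] at cntb
        have zM : ∑ k ∈ Finset.Ioo i j, ((ind (w k < w i) - ind (w k < -(w j)))
              + (ind (w j < w k) - ind (-(w i) < w k)))
            = (∑ k ∈ Finset.Ioo i j, ind (w j < w k ∧ w k < -(w j)))
              - (∑ k ∈ Finset.Ioo i j, ind (w i < w k ∧ w k < -(w i)))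
              - 2 * ∑ k ∈ Finset.Ioo i j, ind (-(w i) < w k ∧ w k < -(w j)) := by
          have step : ∀ k ∈ Finset.Ioo i j, ((ind (w k < w i) - ind (w k < -(w j)))
                + (ind (w j < w k) - ind (-(w i) < w k)))
              = ind (w j < w k ∧ w k < -(w j)) - ind (w i < w k ∧ w k < -(w i))
                - 2 * ind (-(w i) < w k ∧ w k < -(w j)) := by
            intro k hk
            simp only [Finset.mem_Ioo] at hk
            obtain ⟨n1,n2,n3,n4⟩ := hNE k (by omega) (by omega) (by omega) (by omega)
            exact midB_eq_gt hai hbj hord n1 n2 n3 n4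
          rw [Finset.sum_congr rfl step, Finset.sum_sub_distrib, Finset.sum_sub_distrib,
            ← Finset.mul_sum]
        rw [zL, zM, zR] at hD
        clear zL zM zR hvw hvi hvj
        constructor
        · intro h
          have eaL := hiffaL.mp (by omega)
          have ebL := hiffbL.mp (by omega)
          have ebM := hiffbM.mp (by omega)
          have eq2 := hiffq2.mp (by omega)
          refine ⟨hai, hbj, ?_, ?_⟩
          · intro k hk1 hk2
            have t1 := eaL k (by simp only [Finset.mem_Ico]; omega)
            have t2 := ebL k (by simp only [Finset.mem_Ico]; omega)
            omega
          · intro k hki hk1 hkj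
            rcases lt_or_gt_of_ne hki with hlt|hgt
            · have t1 := eaL k (by simp only [Finset.mem_Ico]; omega)
              have t2 := ebL k (by simp only [Finset.mem_Ico]; omega)
              omega
            · have t1 := ebM k (by simp only [Finset.mem_Ioo]; omega)
              have t2 := eq2 k (by simp only [Finset.mem_Ioo]; omega)
              obtain ⟨m1,m2,m3,m4⟩ := hNE k hk1 (by omega) (by omega) (by omega)
              omega
        · rintro ⟨_, _, h3, h4⟩
          have eaL : (∑ k ∈ Finset.Ico 1 i, ind (w i < w k ∧ w k < -(w i))) = i - 1 := by
            apply hiffaL.mpr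
            intro k hk
            simp only [Finset.mem_Ico] at hk
            have t3 := h3 k hk.1 hk.2
            have t4 := h4 k (by omega) hk.1 (by omega)
            omega
          have ebL : (∑ k ∈ Finset.Ico 1 i, ind (w j < w k ∧ w k < -(w j))) = i - 1 := by
            apply hiffbL.mpr
            intro k hk
            simp only [Finset.mem_Ico] at hk
            have t3 := h3 k hk.1 hk.2
            have t4 := h4 k (by omega) hk.1 (by omega)
            omega
          have ebM : (∑ k ∈ Finset.Ioo i j, ind (w j < w k ∧ w k < -(w j))) = j - i - 1 := by
            apply hiffbM.mpr
            intro k hk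
            simp only [Finset.mem_Ioo] at hk
            have t4 := h4 k (by omega) (by omega) hk.2
            omega
          have eq2 : (∑ k ∈ Finset.Ioo i j, ind (-(w i) < w k ∧ w k < -(w j))) = 0 := by
            apply hiffq2.mpr
            intro k hk
            simp only [Finset.mem_Ioo] at hk
            have t4 := h4 k (by omega) (by omega) hk.2
            omega
          omega
      · -- w i < w j  (|a| > |b|)
        rw [ind_true (show (w i < w j ∧ w j < -(w i)) by omega)] at cnta
        rw [ind_false (show ¬(w j < w i ∧ w i < -(w j)) by omega)] at cntb
        have zM : ∑ k ∈ Finset.Ioo i j, ((ind (w k < w i) - ind (w k < -(w j)))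
              + (ind (w j < w k) - ind (-(w i) < w k)))
            = (∑ k ∈ Finset.Ioo i j, ind (w i < w k ∧ w k < -(w i)))
              - (∑ k ∈ Finset.Ioo i j, ind (w j < w k ∧ w k < -(w j)))
              - 2 * ∑ k ∈ Finset.Ioo i j, ind (w i < w k ∧ w k < w j) := by
          have step : ∀ k ∈ Finset.Ioo i j, ((ind (w k < w i) - ind (w k < -(w j)))
                + (ind (w j < w k) - ind (-(w i) < w k)))
              = ind (w i < w k ∧ w k < -(w i)) - ind (w j < w k ∧ w k < -(w j))
                - 2 * ind (w i < w k ∧ w k < w j) := by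
            intro k hk
            simp only [Finset.mem_Ioo] at hk
            obtain ⟨n1,n2,n3,n4⟩ := hNE k (by omega) (by omega) (by omega) (by omega)
            exact midB_eq_lt hai hbj hord n1 n2 n3 n4
          rw [Finset.sum_congr rfl step, Finset.sum_sub_distrib, Finset.sum_sub_distrib,
            ← Finset.mul_sum]
        rw [zL, zM, zR] at hD
        clear zL zM zR hvw hvi hvj
        constructor
        · intro h
          have eaL := hiffaL.mp (by omega)
          have ebL := hiffbL.mp (by omega)
          have eaM := hiffaM.mp (by omega)
          have eq1 := hiffq1.mp (by omega)
          refine ⟨hai, hbj, ?_, ?_⟩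
          · intro k hk1 hk2
            have t1 := eaL k (by simp only [Finset.mem_Ico]; omega)
            have t2 := ebL k (by simp only [Finset.mem_Ico]; omega)
            omega
          · intro k hki hk1 hkj
            rcases lt_or_gt_of_ne hki with hlt|hgt
            · have t1 := eaL k (by simp only [Finset.mem_Ico]; omega)
              have t2 := ebL k (by simp only [Finset.mem_Ico]; omega)
              omega
            · have t1 := eaM k (by simp only [Finset.mem_Ioo]; omega)
              have t2 := eq1 k (by simp only [Finset.mem_Ioo]; omega)
              obtain ⟨m1,m2,m3,m4⟩ := hNE k hk1 (by omega) (by omega) (by omega)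
              omega
        · rintro ⟨_, _, h3, h4⟩
          have eaL : (∑ k ∈ Finset.Ico 1 i, ind (w i < w k ∧ w k < -(w i))) = i - 1 := by
            apply hiffaL.mpr
            intro k hk
            simp only [Finset.mem_Ico] at hk
            have t3 := h3 k hk.1 hk.2
            have t4 := h4 k (by omega) hk.1 (by omega)
            omega
          have ebL : (∑ k ∈ Finset.Ico 1 i, ind (w j < w k ∧ w k < -(w j))) = i - 1 := by
            apply hiffbL.mpr
            intro k hk
            simp only [Finset.mem_Ico] at hk
            have t3 := h3 k hk.1 hk.2
            have t4 := h4 k (by omega) hk.1 (by omega)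
            omega
          have eaM : (∑ k ∈ Finset.Ioo i j, ind (w i < w k ∧ w k < -(w i))) = j - i - 1 := by
            apply hiffaM.mpr
            intro k hk
            simp only [Finset.mem_Ioo] at hk
            have t4 := h4 k (by omega) (by omega) hk.2
            omega
          have eq1 : (∑ k ∈ Finset.Ioo i j, ind (w i < w k ∧ w k < w j)) = 0 := by
            apply hiffq1.mpr
            intro k hk
            simp only [Finset.mem_Ioo] at hk
            have t4 := h4 k (by omega) (by omega) hk.2
            omega
          omega
    · -- w i < 0 < w j : impossible case
      have hmb : |w j| = w j := abs_of_pos hbj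
      have cntb := count_abs_lt hw (show (1:ℤ) ≤ w j by omega) (show w j ≤ (n:ℤ) by omega)
      rw [sum_split2 n h1 hij hjn] at cntb
      have zL : ∑ k ∈ Finset.Ico 1 i, ((ind (w i < w k) - ind (-(w i) < w k))
            + (ind (w j < w k) - ind (-(w j) < w k)))
          = (∑ k ∈ Finset.Ico 1 i, ind (w i < w k ∧ w k < -(w i)))
            - ∑ k ∈ Finset.Ico 1 i, ind (-(w j) < w k ∧ w k < w j) := by
        rw [← Finset.sum_sub_distrib]
        apply Finset.sum_congr rfl
        intro k hk
        simp only [Finset.mem_Ico] at hk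
        obtain ⟨n1,n2,n3,n4⟩ := hNE k hk.1 (by omega) (by omega) (by omega)
        rw [pair_neg hai n1 n2, pair_pos hbj n3 n4]
        ring
      have zR : ∑ k ∈ Finset.Ioc j (n:ℤ), ((ind (w k < w i) - ind (w k < -(w i)))
            + (ind (w k < w j) - ind (w k < -(w j))))
          = (∑ k ∈ Finset.Ioc j (n:ℤ), ind (-(w j) < w k ∧ w k < w j))
            - ∑ k ∈ Finset.Ioc j (n:ℤ), ind (w i < w k ∧ w k < -(w i)) := by
        rw [← Finset.sum_sub_distrib]
        apply Finset.sum_congr rfl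
        intro k hk
        simp only [Finset.mem_Ioc] at hk
        obtain ⟨n1,n2,n3,n4⟩ := hNE k (by omega) hk.2 (by omega) (by omega)
        rw [pair_neg' hai n1 n2, pair_pos' hbj n3 n4]
        ring
      have zMle : ∑ k ∈ Finset.Ioo i j, ((ind (w k < w i) - ind (w k < -(w j)))
            + (ind (w j < w k) - ind (-(w i) < w k)))
          ≤ (∑ k ∈ Finset.Ioo i j, ind (w i < w k ∧ w k < -(w i)))
            + ∑ k ∈ Finset.Ioo i j, ind (-(w j) < w k ∧ w k < w j) := by
        rw [← Finset.sum_add_distrib]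
        apply Finset.sum_le_sum
        intro k hk
        simp only [Finset.mem_Ioo] at hk
        obtain ⟨n1,n2,n3,n4⟩ := hNE k (by omega) (by omega) (by omega) (by omega)
        exact midB_le1 hai hbj n1 n2 n3 n4
      rw [zL, zR] at hD
      clear zL zR hvw hvi hvj
      have bndaL := sum_ind_le_card (Finset.Ico (1:ℤ) i)
        (fun k => w i < w k ∧ w k < -(w i)) cardL
      have bndaM := sum_ind_le_card (Finset.Ioo i j)
        (fun k => w i < w k ∧ w k < -(w i)) cardM
      have bndbM := sum_ind_le_card (Finset.Ioo i j)
        (fun k => -(w j) < w k ∧ w k < w j) cardM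
      have nn1 := sum_ind_nonneg (Finset.Ico (1:ℤ) i) (fun k => -(w j) < w k ∧ w k < w j)
      have nn2 := sum_ind_nonneg (Finset.Ioc j (n:ℤ)) (fun k => w i < w k ∧ w k < -(w i))
      have nn3 := sum_ind_nonneg (Finset.Ioc j (n:ℤ)) (fun k => -(w j) < w k ∧ w k < w j)
      have nn4 := sum_ind_nonneg (Finset.Ico (1:ℤ) i) (fun k => w i < w k ∧ w k < -(w i))
      have nn5 := sum_ind_nonneg (Finset.Ioo i j) (fun k => w i < w k ∧ w k < -(w i))
      have nn6 := sum_ind_nonneg (Finset.Ioo i j) (fun k => -(w j) < w k ∧ w k < w j)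
      beta_reduce at bndaL bndaM bndbM nn1 nn2 nn3 nn4 nn5 nn6
      have ei1 := ind_nonneg (w i < w i ∧ w i < -(w i))
      have ei2 := ind_le_one (w i < w i ∧ w i < -(w i))
      have ej1 := ind_nonneg (w i < w j ∧ w j < -(w i))
      have ej2 := ind_le_one (w i < w j ∧ w j < -(w i))
      have fi1 := ind_nonneg (-(w j) < w i ∧ w i < w j)
      have fi2 := ind_le_one (-(w j) < w i ∧ w i < w j)
      have fj1 := ind_nonneg (-(w j) < w j ∧ w j < w j)
      have fj2 := ind_le_one (-(w j) < w j ∧ w j < w j)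
      constructor
      · intro h; exfalso; omega
      · rintro ⟨-, hb', -, -⟩; omega
  · -- 0 < w i
    have hma : |w i| = w i := abs_of_pos hai
    have cnta := count_abs_lt hw (show (1:ℤ) ≤ w i by omega) (show w i ≤ (n:ℤ) by omega)
    rw [sum_split2 n h1 hij hjn] at cnta
    have ei1 := ind_nonneg (-(w i) < w i ∧ w i < w i)
    have ei2 := ind_le_one (-(w i) < w i ∧ w i < w i)
    have ej1 := ind_nonneg (-(w i) < w j ∧ w j < w i)
    have ej2 := ind_le_one (-(w i) < w j ∧ w j < w i)
    rcases lt_or_gt_of_ne hwj0 with hbj|hbj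
    · -- 0 < w i, w j < 0 : impossible
      have hmb : |w j| = -(w j) := abs_of_neg hbj
      have cntb := count_abs_lt hw (show (1:ℤ) ≤ -(w j) by omega)
        (show -(w j) ≤ (n:ℤ) by omega)
      rw [sum_split2 n h1 hij hjn] at cntb
      simp only [neg_neg] at cntb
      have zL : ∑ k ∈ Finset.Ico 1 i, ((ind (w i < w k) - ind (-(w i) < w k))
            + (ind (w j < w k) - ind (-(w j) < w k)))
          = (∑ k ∈ Finset.Ico 1 i, ind (w j < w k ∧ w k < -(w j)))
            - ∑ k ∈ Finset.Ico 1 i, ind (-(w i) < w k ∧ w k < w i) := by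
        rw [← Finset.sum_sub_distrib]
        apply Finset.sum_congr rfl
        intro k hk
        simp only [Finset.mem_Ico] at hk
        obtain ⟨n1,n2,n3,n4⟩ := hNE k hk.1 (by omega) (by omega) (by omega)
        rw [pair_pos hai n1 n2, pair_neg hbj n3 n4]
        ring
      have zR : ∑ k ∈ Finset.Ioc j (n:ℤ), ((ind (w k < w i) - ind (w k < -(w i)))
            + (ind (w k < w j) - ind (w k < -(w j))))
          = (∑ k ∈ Finset.Ioc j (n:ℤ), ind (-(w i) < w k ∧ w k < w i))
            - ∑ k ∈ Finset.Ioc j (n:ℤ), ind (w j < w k ∧ w k < -(w j)) := by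
        rw [← Finset.sum_sub_distrib]
        apply Finset.sum_congr rfl
        intro k hk
        simp only [Finset.mem_Ioc] at hk
        obtain ⟨n1,n2,n3,n4⟩ := hNE k (by omega) hk.2 (by omega) (by omega)
        rw [pair_pos' hai n1 n2, pair_neg' hbj n3 n4]
        ring
      have zMle : ∑ k ∈ Finset.Ioo i j, ((ind (w k < w i) - ind (w k < -(w j)))
            + (ind (w j < w k) - ind (-(w i) < w k)))
          ≤ (∑ k ∈ Finset.Ioo i j, ind (-(w i) < w k ∧ w k < w i))
            + ∑ k ∈ Finset.Ioo i j, ind (w j < w k ∧ w k < -(w j)) := by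
        rw [← Finset.sum_add_distrib]
        apply Finset.sum_le_sum
        intro k hk
        simp only [Finset.mem_Ioo] at hk
        obtain ⟨n1,n2,n3,n4⟩ := hNE k (by omega) (by omega) (by omega) (by omega)
        exact midB_le2 hai hbj n1 n2 n3 n4
      rw [zL, zR] at hD
      clear zL zR hvw hvi hvj
      have bndbL := sum_ind_le_card (Finset.Ico (1:ℤ) i)
        (fun k => w j < w k ∧ w k < -(w j)) cardL
      have bndaM := sum_ind_le_card (Finset.Ioo i j)
        (fun k => -(w i) < w k ∧ w k < w i) cardM
      have bndbM := sum_ind_le_card (Finset.Ioo i j)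
        (fun k => w j < w k ∧ w k < -(w j)) cardM
      have nn1 := sum_ind_nonneg (Finset.Ico (1:ℤ) i) (fun k => -(w i) < w k ∧ w k < w i)
      have nn2 := sum_ind_nonneg (Finset.Ioc j (n:ℤ)) (fun k => -(w i) < w k ∧ w k < w i)
      have nn3 := sum_ind_nonneg (Finset.Ioc j (n:ℤ)) (fun k => w j < w k ∧ w k < -(w j))
      have nn4 := sum_ind_nonneg (Finset.Ico (1:ℤ) i) (fun k => w j < w k ∧ w k < -(w j))
      have nn5 := sum_ind_nonneg (Finset.Ioo i j) (fun k => -(w i) < w k ∧ w k < w i)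
      have nn6 := sum_ind_nonneg (Finset.Ioo i j) (fun k => w j < w k ∧ w k < -(w j))
      beta_reduce at bndbL bndaM bndbM nn1 nn2 nn3 nn4 nn5 nn6
      have fi1 := ind_nonneg (w j < w i ∧ w i < -(w j))
      have fi2 := ind_le_one (w j < w i ∧ w i < -(w j))
      have fj1 := ind_nonneg (w j < w j ∧ w j < -(w j))
      have fj2 := ind_le_one (w j < w j ∧ w j < -(w j))
      constructor
      · intro h; exfalso; omega
      · rintro ⟨ha', -, -, -⟩; omega
    · -- 0 < w i, 0 < w j : impossible
      have hmb : |w j| = w j := abs_of_pos hbj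
      have cntb := count_abs_lt hw (show (1:ℤ) ≤ w j by omega) (show w j ≤ (n:ℤ) by omega)
      rw [sum_split2 n h1 hij hjn] at cntb
      have zL : ∑ k ∈ Finset.Ico 1 i, ((ind (w i < w k) - ind (-(w i) < w k))
            + (ind (w j < w k) - ind (-(w j) < w k)))
          = -((∑ k ∈ Finset.Ico 1 i, ind (-(w i) < w k ∧ w k < w i))
            + ∑ k ∈ Finset.Ico 1 i, ind (-(w j) < w k ∧ w k < w j)) := by
        rw [← Finset.sum_add_distrib, ← Finset.sum_neg_distrib]
        apply Finset.sum_congr rfl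
        intro k hk
        simp only [Finset.mem_Ico] at hk
        obtain ⟨n1,n2,n3,n4⟩ := hNE k hk.1 (by omega) (by omega) (by omega)
        rw [pair_pos hai n1 n2, pair_pos hbj n3 n4]
        ring
      have zR : ∑ k ∈ Finset.Ioc j (n:ℤ), ((ind (w k < w i) - ind (w k < -(w i)))
            + (ind (w k < w j) - ind (w k < -(w j))))
          = (∑ k ∈ Finset.Ioc j (n:ℤ), ind (-(w i) < w k ∧ w k < w i))
            + ∑ k ∈ Finset.Ioc j (n:ℤ), ind (-(w j) < w k ∧ w k < w j) := by
        rw [← Finset.sum_add_distrib]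
        apply Finset.sum_congr rfl
        intro k hk
        simp only [Finset.mem_Ioc] at hk
        obtain ⟨n1,n2,n3,n4⟩ := hNE k (by omega) hk.2 (by omega) (by omega)
        rw [pair_pos' hai n1 n2, pair_pos' hbj n3 n4]
      have zMle : ∑ k ∈ Finset.Ioo i j, ((ind (w k < w i) - ind (w k < -(w j)))
            + (ind (w j < w k) - ind (-(w i) < w k)))
          ≤ (∑ k ∈ Finset.Ioo i j, ind (-(w i) < w k ∧ w k < w i))
            + ∑ k ∈ Finset.Ioo i j, ind (-(w j) < w k ∧ w k < w j) := by
        rw [← Finset.sum_add_distrib]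
        apply Finset.sum_le_sum
        intro k hk
        simp only [Finset.mem_Ioo] at hk
        obtain ⟨n1,n2,n3,n4⟩ := hNE k (by omega) (by omega) (by omega) (by omega)
        exact midB_le3 hai hbj n1 n2 n3 n4
      rw [zL, zR] at hD
      clear zL zR hvw hvi hvj
      have nn1 := sum_ind_nonneg (Finset.Ico (1:ℤ) i) (fun k => -(w i) < w k ∧ w k < w i)
      have nn2 := sum_ind_nonneg (Finset.Ico (1:ℤ) i) (fun k => -(w j) < w k ∧ w k < w j)
      have nn3 := sum_ind_nonneg (Finset.Ioc j (n:ℤ)) (fun k => -(w i) < w k ∧ w k < w i)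
      have nn4 := sum_ind_nonneg (Finset.Ioc j (n:ℤ)) (fun k => -(w j) < w k ∧ w k < w j)
      have nn5 := sum_ind_nonneg (Finset.Ioo i j) (fun k => -(w i) < w k ∧ w k < w i)
      have nn6 := sum_ind_nonneg (Finset.Ioo i j) (fun k => -(w j) < w k ∧ w k < w j)
      beta_reduce at nn1 nn2 nn3 nn4 nn5 nn6
      have fi1 := ind_nonneg (-(w j) < w i ∧ w i < w j)
      have fi2 := ind_le_one (-(w j) < w i ∧ w i < w j)
      have fj1 := ind_nonneg (-(w j) < w j ∧ w j < w j)
      have fj2 := ind_le_one (-(w j) < w j ∧ w j < w j)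
      constructor
      · intro h; exfalso; omega
      · rintro ⟨ha', -, -, -⟩; omega

end
end AuxLen
namespace AuxLen
noncomputable section
open scoped Classical
open Finset Equiv

set_option maxHeartbeats 1000000

-- value computation lemmas for the three reflection shapes
lemma tA_i {i j : ℤ} (h1 : 1 ≤ i) (hij : i < j) :
    (Equiv.swap i j * Equiv.swap (-i) (-j)) i = j := by
  simp only [Equiv.Perm.mul_apply, Equiv.swap_apply_def]
  split_ifs <;> omega

lemma tA_j {i j : ℤ} (h1 : 1 ≤ i) (hij : i < j) :
    (Equiv.swap i j * Equiv.swap (-i) (-j)) j = i := by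
  simp only [Equiv.Perm.mul_apply, Equiv.swap_apply_def]
  split_ifs <;> omega

lemma tA_k {i j k : ℤ} (h1 : 1 ≤ i) (hij : i < j) (hk : 1 ≤ k) (hki : k ≠ i) (hkj : k ≠ j) :
    (Equiv.swap i j * Equiv.swap (-i) (-j)) k = k := by
  simp only [Equiv.Perm.mul_apply, Equiv.swap_apply_def]
  split_ifs <;> omega

lemma tB_i {i j : ℤ} (h1 : 1 ≤ i) (hij : i < j) :
    (Equiv.swap (-i) j * Equiv.swap i (-j)) i = -j := by
  simp only [Equiv.Perm.mul_apply, Equiv.swap_apply_def]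
  split_ifs <;> omega

lemma tB_j {i j : ℤ} (h1 : 1 ≤ i) (hij : i < j) :
    (Equiv.swap (-i) j * Equiv.swap i (-j)) j = -i := by
  simp only [Equiv.Perm.mul_apply, Equiv.swap_apply_def]
  split_ifs <;> omega

lemma tB_negi {i j : ℤ} (h1 : 1 ≤ i) (hij : i < j) :
    (Equiv.swap (-i) j * Equiv.swap i (-j)) (-i) = j := by
  simp only [Equiv.Perm.mul_apply, Equiv.swap_apply_def]
  split_ifs <;> omega

lemma tB_negj {i j : ℤ} (h1 : 1 ≤ i) (hij : i < j) :
    (Equiv.swap (-i) j * Equiv.swap i (-j)) (-j) = i := by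
  simp only [Equiv.Perm.mul_apply, Equiv.swap_apply_def]
  split_ifs <;> omega

lemma tB_k {i j k : ℤ} (h1 : 1 ≤ i) (hij : i < j) (hk : 1 ≤ k) (hki : k ≠ i) (hkj : k ≠ j) :
    (Equiv.swap (-i) j * Equiv.swap i (-j)) k = k := by
  simp only [Equiv.Perm.mul_apply, Equiv.swap_apply_def]
  split_ifs <;> omega

lemma tC_i {i : ℤ} : (Equiv.swap (-i) i) i = -i := Equiv.swap_apply_right _ _

lemma tC_negi {i : ℤ} : (Equiv.swap (-i) i) (-i) = i := Equiv.swap_apply_left _ _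

lemma tC_k {i k : ℤ} (h1 : 1 ≤ i) (hk : 1 ≤ k) (hki : k ≠ i) :
    (Equiv.swap (-i) i) k = k :=
  Equiv.swap_apply_of_ne_of_ne (by omega) (by omega)

-- membership of reflections in BGroup
lemma memA {n : ℕ} {i j : ℤ} (h1 : 1 ≤ i) (hij : i < j) (hjn : j ≤ (n:ℤ)) :
    Equiv.swap i j * Equiv.swap (-i) (-j) ∈ BGroup n := by
  refine ⟨fun x => ?_, fun x hx => ?_⟩
  · simp only [Equiv.Perm.mul_apply, Equiv.swap_apply_def]
    split_ifs <;> omega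
  · have hx' : x < -(n:ℤ) ∨ (n:ℤ) < x := by
      rcases abs_cases x with ⟨h,_⟩|⟨h,_⟩ <;> omega
    simp only [Equiv.Perm.mul_apply, Equiv.swap_apply_def]
    split_ifs <;> omega

lemma memB {n : ℕ} {i j : ℤ} (h1 : 1 ≤ i) (hij : i < j) (hjn : j ≤ (n:ℤ)) :
    Equiv.swap (-i) j * Equiv.swap i (-j) ∈ BGroup n := by
  refine ⟨fun x => ?_, fun x hx => ?_⟩
  · simp only [Equiv.Perm.mul_apply, Equiv.swap_apply_def]
    split_ifs <;> omega
  · have hx' : x < -(n:ℤ) ∨ (n:ℤ) < x := by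
      rcases abs_cases x with ⟨h,_⟩|⟨h,_⟩ <;> omega
    simp only [Equiv.Perm.mul_apply, Equiv.swap_apply_def]
    split_ifs <;> omega

lemma memC {n : ℕ} {i : ℤ} (h1 : 1 ≤ i) (hin : i ≤ (n:ℤ)) :
    Equiv.swap (-i) i ∈ BGroup n := by
  refine ⟨fun x => ?_, fun x hx => ?_⟩
  · simp only [Equiv.swap_apply_def]
    split_ifs <;> omega
  · have hx' : x < -(n:ℤ) ∨ (n:ℤ) < x := by
      rcases abs_cases x with ⟨h,_⟩|⟨h,_⟩ <;> omega
    simp only [Equiv.swap_apply_def]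
    split_ifs <;> omega

lemma sqA {i j : ℤ} (h1 : 1 ≤ i) (hij : i < j) :
    (Equiv.swap i j * Equiv.swap (-i) (-j)) * (Equiv.swap i j * Equiv.swap (-i) (-j)) = 1 := by
  ext x
  simp only [Equiv.Perm.mul_apply, Equiv.Perm.one_apply, Equiv.swap_apply_def]
  split_ifs <;> omega

lemma SB_subset {n : ℕ} : ∀ s ∈ SB n, s ∈ BGroup n := by
  rintro s (⟨hn, rfl⟩ | ⟨i, h1, h2, rfl⟩)
  · exact memC (i := 1) le_rfl (by exact_mod_cast hn)
  · exact memA h1 (by omega) h2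

lemma SB_sq {n : ℕ} : ∀ s ∈ SB n, s * s = 1 := by
  rintro s (⟨hn, rfl⟩ | ⟨i, h1, h2, rfl⟩)
  · exact Equiv.swap_mul_self _ _
  · exact sqA h1 (by omega)

variable {n : ℕ}

lemma step_le {u : Equiv.Perm ℤ} (hu : u ∈ BGroup n) {s : Equiv.Perm ℤ} (hs : s ∈ SB n) :
    statB n (u * s) ≤ statB n u + 1 := by
  rcases hs with ⟨hn, rfl⟩ | ⟨i, h1, h2, rfl⟩
  · have hvw : ∀ k, 1 ≤ k → k ≤ (n:ℤ) → k ≠ 1 → (u * Equiv.swap (-1:ℤ) 1) k = u k := by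
      intro k hk1 hk2 hk3
      rw [Equiv.Perm.mul_apply, Equiv.swap_apply_of_ne_of_ne (by omega) (by omega)]
    have hvi : (u * Equiv.swap (-1:ℤ) 1) 1 = -(u 1) := by
      rw [Equiv.Perm.mul_apply, Equiv.swap_apply_right, w_neg hu]
    have h1n : (1:ℤ) ≤ (n:ℤ) := by exact_mod_cast hn
    have hne0 : u 1 ≠ 0 := w_ne_zero hu one_ne_zero
    rcases lt_or_gt_of_ne hne0 with ha|ha
    · have hD := evalC_neg hu (u * Equiv.swap (-1:ℤ) 1) le_rfl h1n hvw hvi ha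
      rw [Finset.Ico_self, Finset.sum_empty] at hD
      omega
    · have hD := evalC_pos hu (u * Equiv.swap (-1:ℤ) 1) le_rfl h1n hvw hvi ha
      rw [Finset.Ico_self, Finset.sum_empty] at hD
      omega
  · have hij : i < i + 1 := by omega
    have hvw : ∀ k, 1 ≤ k → k ≤ (n:ℤ) → k ≠ i → k ≠ i+1 →
        (u * (Equiv.swap i (i+1) * Equiv.swap (-i) (-(i+1)))) k = u k := by
      intro k hk1 hk2 hk3 hk4
      rw [Equiv.Perm.mul_apply, tA_k h1 hij hk1 hk3 hk4]
    have hvi : (u * (Equiv.swap i (i+1) * Equiv.swap (-i) (-(i+1)))) i = u (i+1) := by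
      rw [Equiv.Perm.mul_apply, tA_i h1 hij]
    have hvj : (u * (Equiv.swap i (i+1) * Equiv.swap (-i) (-(i+1)))) (i+1) = u i := by
      rw [Equiv.Perm.mul_apply, tA_j h1 hij]
    have hD := diffA n u (u * (Equiv.swap i (i+1) * Equiv.swap (-i) (-(i+1)))) h1 hij h2
      hvw hvi hvj
    have hIoo : Finset.Ioo i (i+1) = ∅ := by
      ext x
      simp only [Finset.mem_Ioo, Finset.notMem_empty, iff_false]
      omega
    rw [hIoo, Finset.sum_empty] at hD
    have i1 := ind_nonneg (u (i+1) < u i)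
    have i2 := ind_le_one (u (i+1) < u i)
    have i3 := ind_nonneg (u i < u (i+1))
    have i4 := ind_le_one (u i < u (i+1))
    omega

lemma descent {w : Equiv.Perm ℤ} (hw : w ∈ BGroup n) (hne : statB n w ≠ 0) :
    ∃ s ∈ SB n, (w * s ∈ BGroup n ∧ statB n (w * s) = statB n w - 1) := by
  have hn1 : 1 ≤ n := by
    by_contra h
    apply hne
    have hn0 : Finset.Icc (1:ℤ) (n:ℤ) = ∅ := Finset.Icc_eq_empty (by
      intro hcon
      have : (n:ℤ) = 0 := by omega
      omega)
    unfold statB invB nsB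
    rw [hn0]
    simp
  by_cases hneg : w 1 < 0
  · have hsSB : Equiv.swap (-1:ℤ) 1 ∈ SB n := Or.inl ⟨hn1, rfl⟩
    refine ⟨Equiv.swap (-1:ℤ) 1, hsSB, mul_mem hw (SB_subset _ hsSB), ?_⟩
    have hvw : ∀ k, 1 ≤ k → k ≤ (n:ℤ) → k ≠ 1 → (w * Equiv.swap (-1:ℤ) 1) k = w k := by
      intro k hk1 hk2 hk3
      rw [Equiv.Perm.mul_apply, Equiv.swap_apply_of_ne_of_ne (by omega) (by omega)]
    have hvi : (w * Equiv.swap (-1:ℤ) 1) 1 = -(w 1) := by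
      rw [Equiv.Perm.mul_apply, Equiv.swap_apply_right, w_neg hw]
    have hD := evalC_neg hw (w * Equiv.swap (-1:ℤ) 1) le_rfl (by exact_mod_cast hn1) hvw hvi hneg
    rw [Finset.Ico_self, Finset.sum_empty] at hD
    omega
  · by_cases hdesc : ∃ i:ℤ, 1 ≤ i ∧ i+1 ≤ (n:ℤ) ∧ w (i+1) < w i
    · obtain ⟨i, h1, h2, hlt⟩ := hdesc
      have hsSB : Equiv.swap i (i+1) * Equiv.swap (-i) (-(i+1)) ∈ SB n :=
        Or.inr ⟨i, h1, h2, rfl⟩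
      refine ⟨_, hsSB, mul_mem hw (SB_subset _ hsSB), ?_⟩
      have hij : i < i + 1 := by omega
      have hvw : ∀ k, 1 ≤ k → k ≤ (n:ℤ) → k ≠ i → k ≠ i+1 →
          (w * (Equiv.swap i (i+1) * Equiv.swap (-i) (-(i+1)))) k = w k := by
        intro k hk1 hk2 hk3 hk4
        rw [Equiv.Perm.mul_apply, tA_k h1 hij hk1 hk3 hk4]
      have hvi : (w * (Equiv.swap i (i+1) * Equiv.swap (-i) (-(i+1)))) i = w (i+1) := by
        rw [Equiv.Perm.mul_apply, tA_i h1 hij]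
      have hvj : (w * (Equiv.swap i (i+1) * Equiv.swap (-i) (-(i+1)))) (i+1) = w i := by
        rw [Equiv.Perm.mul_apply, tA_j h1 hij]
      have hD := diffA n w (w * (Equiv.swap i (i+1) * Equiv.swap (-i) (-(i+1)))) h1 hij h2
        hvw hvi hvj
      have hIoo : Finset.Ioo i (i+1) = ∅ := by
        ext x
        simp only [Finset.mem_Ioo, Finset.notMem_empty, iff_false]
        omega
      rw [hIoo, Finset.sum_empty, ind_true hlt, ind_false (by omega)] at hD
      omega
    · exfalso
      apply hne
      push_neg at hdesc
      have hadj : ∀ i:ℤ, 1 ≤ i → i+1 ≤ (n:ℤ) → w i < w (i+1) := by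
        intro i hi1 hi2
        have hle := hdesc i hi1 hi2
        have hne' : w i ≠ w (i+1) := fun h => by have := w.injective h; omega
        omega
      have chain : ∀ d : ℕ, ∀ x : ℤ, 1 ≤ x → x + 1 + (d:ℤ) ≤ (n:ℤ) → w x < w (x + 1 + (d:ℤ)) := by
        intro d
        induction d with
        | zero =>
          intro x hx1 hx2
          simp only [Nat.cast_zero, add_zero] at hx2 ⊢
          exact hadj x hx1 hx2
        | succ d ih =>
          intro x hx1 hx2
          push_cast at hx2 ⊢
          have e : x + 1 + ((d:ℤ) + 1) = (x + 1 + (d:ℤ)) + 1 := by ring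
          rw [e]
          have step1 : w x < w (x + 1 + (d:ℤ)) := ih x hx1 (by omega)
          have step2 : w (x+1+(d:ℤ)) < w ((x+1+(d:ℤ))+1) := hadj _ (by omega) (by omega)
          omega
      have mono : ∀ x y : ℤ, 1 ≤ x → x < y → y ≤ (n:ℤ) → w x < w y := by
        intro x y hx hxy hy
        have e : ((y - x - 1).toNat : ℤ) = y - x - 1 := Int.toNat_of_nonneg (by omega)
        have hd : y = x + 1 + ((y - x - 1).toNat : ℤ) := by omega
        rw [hd]
        exact chain _ x hx (by omega)
      have hpos : ∀ k:ℤ, 1 ≤ k → k ≤ (n:ℤ) → 0 < w k := by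
        intro k hk1 hk2
        have h10 : w 1 ≠ 0 := w_ne_zero hw one_ne_zero
        have h1p : 0 < w 1 := by omega
        rcases lt_or_eq_of_le hk1 with h|h
        · have := mono 1 k le_rfl h hk2; omega
        · rw [← h]; omega
      unfold statB invB nsB
      have hinv0 : ∑ x ∈ Finset.Icc (1:ℤ) (n:ℤ), ∑ y ∈ Finset.Icc (1:ℤ) (n:ℤ),
          ind (x < y ∧ w y < w x) = 0 := by
        apply Finset.sum_eq_zero
        intro x hx
        apply Finset.sum_eq_zero
        intro y hy
        simp only [Finset.mem_Icc] at hx hy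
        apply ind_false
        rintro ⟨hxy, hlt⟩
        have := mono x y hx.1 hxy hy.2
        omega
      have hns0 : ∑ k ∈ Finset.Icc (1:ℤ) (n:ℤ), eta (w k) = 0 := by
        apply Finset.sum_eq_zero
        intro k hk
        simp only [Finset.mem_Icc] at hk
        have := hpos k hk.1 hk.2
        unfold eta
        rw [if_neg (by omega)]
      rw [hinv0, hns0]
      ring

lemma statB_zero {w : Equiv.Perm ℤ} (hw : w ∈ BGroup n) (h0 : statB n w = 0) : w = 1 := by
  have hinvnn : 0 ≤ invB n w := Finset.sum_nonneg fun x _ =>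
    Finset.sum_nonneg fun y _ => ind_nonneg _
  have hnsnn : 0 ≤ nsB n w := Finset.sum_nonneg fun k _ => by
    unfold eta; split_ifs <;> omega
  have hinv0 : invB n w = 0 := by unfold statB at h0; omega
  have hns0 : nsB n w = 0 := by unfold statB at h0; omega
  have hNoInv : ∀ x y : ℤ, 1 ≤ x → x < y → y ≤ (n:ℤ) → w x < w y := by
    intro x y hx hxy hy
    have hx' : x ∈ Finset.Icc (1:ℤ) (n:ℤ) := by simp only [Finset.mem_Icc]; omega
    have hy' : y ∈ Finset.Icc (1:ℤ) (n:ℤ) := by simp only [Finset.mem_Icc]; omega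
    have hrow := (Finset.sum_eq_zero_iff_of_nonneg
      (fun x _ => Finset.sum_nonneg fun y _ => ind_nonneg _)).mp hinv0 x hx'
    have hterm := (Finset.sum_eq_zero_iff_of_nonneg
      (fun y _ => ind_nonneg _)).mp hrow y hy'
    have hne' : w x ≠ w y := fun h => by have := w.injective h; omega
    by_contra hcon
    rw [ind_true ⟨hxy, by omega⟩] at hterm
    omega
  have hPos : ∀ k:ℤ, 1 ≤ k → k ≤ (n:ℤ) → 0 < w k := by
    intro k hk1 hk2
    have hk' : k ∈ Finset.Icc (1:ℤ) (n:ℤ) := by simp only [Finset.mem_Icc]; omega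
    have hterm := (Finset.sum_eq_zero_iff_of_nonneg
      (fun k _ => by unfold eta; split_ifs <;> omega)).mp hns0 k hk'
    have hk0 : w k ≠ 0 := w_ne_zero hw (by omega)
    unfold eta at hterm
    split_ifs at hterm <;> omega
  have hlb : ∀ k : ℤ, 1 ≤ k → (k ≤ (n:ℤ) → k ≤ w k) := by
    have base : (1:ℤ) ≤ (n:ℤ) → 1 ≤ w 1 := fun h => hPos 1 le_rfl h
    have step : ∀ k:ℤ, 1 ≤ k → (k ≤ (n:ℤ) → k ≤ w k) → ((k+1) ≤ (n:ℤ) → k+1 ≤ w (k+1)) := by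
      intro k hk ih h
      have h2 := hNoInv k (k+1) hk (by omega) h
      have h3 := ih (by omega)
      omega
    intro k hk
    exact Int.le_induction base step k hk
  have hubaux : ∀ d : ℕ, ∀ k : ℤ, 1 ≤ k → k + (d:ℤ) = (n:ℤ) → w k ≤ k := by
    intro d
    induction d with
    | zero =>
      intro k hk1 hk2
      push_cast at hk2
      have h2 := (w_window hw hk1 (by omega)).2
      have h3 : |w k| = w k := abs_of_pos (hPos k hk1 (by omega))
      omega
    | succ d ih =>
      intro k hk1 hk2
      push_cast at hk2
      have h4 := hNoInv k (k+1) hk1 (by omega) (by omega)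
      have h5 := ih (k+1) (by omega) (by push_cast; omega)
      omega
  have hub : ∀ k:ℤ, 1 ≤ k → k ≤ (n:ℤ) → w k ≤ k := by
    intro k hk1 hk2
    have e : (((n:ℤ) - k).toNat : ℤ) = (n:ℤ) - k := Int.toNat_of_nonneg (by omega)
    exact hubaux ((n:ℤ) - k).toNat k hk1 (by omega)
  ext x
  simp only [Equiv.Perm.one_apply]
  rcases (show (1 ≤ x ∧ x ≤ (n:ℤ)) ∨ x = 0 ∨ (1 ≤ -x ∧ -x ≤ (n:ℤ)) ∨ (n:ℤ) < |x| from by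
    rcases abs_cases x with ⟨h,_⟩|⟨h,_⟩ <;> omega) with ⟨ha,hb⟩|h|⟨ha,hb⟩|h
  · exact le_antisymm (hub x ha hb) (hlb x ha hb)
  · rw [h]; exact w_zero hw
  · have hn := w_neg hw (-x)
    rw [neg_neg] at hn
    have h2 : w (-x) = -x := le_antisymm (hub _ ha hb) (hlb _ ha hb)
    omega
  · exact hw.2 x h

lemma words_ge : ∀ L : List (Equiv.Perm ℤ), (∀ s ∈ L, s ∈ SB n) →
    statB n L.prod ≤ (L.length : ℤ) := by
  intro L
  induction L using List.reverseRecOn with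
  | nil =>
    intro _
    simp only [List.prod_nil, List.length_nil, Nat.cast_zero]
    rw [statB_one]
  | append_singleton L s ih =>
    intro h
    have hL : ∀ s' ∈ L, s' ∈ SB n := fun s' hs' => h s' (by simp [hs'])
    have hs : s ∈ SB n := h s (by simp)
    have hmem : L.prod ∈ BGroup n := list_prod_mem (fun x hx => SB_subset x (hL x hx))
    have hstep := step_le hmem hs
    rw [List.prod_append, List.prod_singleton]
    have hih := ih hL
    simp only [List.length_append, List.length_singleton]
    push_cast
    omega

lemma exists_word : ∀ N : ℕ, ∀ w : Equiv.Perm ℤ, w ∈ BGroup n → statB n w ≤ (N:ℤ) →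
    ∃ L : List (Equiv.Perm ℤ), (∀ s ∈ L, s ∈ SB n) ∧ L.prod = w ∧ (L.length : ℤ) = statB n w := by
  intro N
  induction N with
  | zero =>
    intro w hw hle
    have h0 : statB n w = 0 := le_antisymm (by exact_mod_cast hle) (statB_nonneg n w)
    exact ⟨[], by simp, by rw [List.prod_nil, statB_zero hw h0], by simp [h0]⟩
  | succ N ih =>
    intro w hw hle
    by_cases h : statB n w ≤ (N:ℤ)
    · exact ih w hw h
    · have hne : statB n w ≠ 0 := by push_cast at hle; omega
      obtain ⟨s, hsSB, hmem, heq⟩ := descent hw hne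
      obtain ⟨L, hL1, hL2, hL3⟩ := ih (w * s) hmem (by push_cast at hle ⊢; omega)
      refine ⟨L ++ [s], ?_, ?_, ?_⟩
      · intro x hx
        rcases List.mem_append.mp hx with h'|h'
        · exact hL1 x h'
        · rw [List.mem_singleton.mp h']; exact hsSB
      · rw [List.prod_append, List.prod_singleton, hL2, mul_assoc, SB_sq s hsSB, mul_one]
      · simp only [List.length_append, List.length_singleton]
        push_cast
        omega

lemma lenB_eq {w : Equiv.Perm ℤ} (hw : w ∈ BGroup n) : (lenB n w : ℤ) = statB n w := by
  obtain ⟨L, hL1, hL2, hL3⟩ := exists_word (statB n w).toNat w hw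
    (by rw [Int.toNat_of_nonneg (statB_nonneg n w)])
  have hmemS : lenB n w ≤ L.length := Nat.sInf_le ⟨L, hL1, hL2, rfl⟩
  have hNE : {r : ℕ | ∃ L : List (Equiv.Perm ℤ),
      (∀ s ∈ L, s ∈ SB n) ∧ L.prod = w ∧ L.length = r}.Nonempty :=
    ⟨L.length, L, hL1, hL2, rfl⟩
  obtain ⟨L₀, hP1, hP2, hP3⟩ := Nat.sInf_mem hNE
  have hge : statB n w ≤ (L₀.length : ℤ) := by
    have h2 := words_ge L₀ hP1
    rw [hP2] at h2
    exact h2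
  have hP3' : L₀.length = lenB n w := hP3
  omega

end
end AuxLen
namespace AuxLen
noncomputable section
open scoped Classical
open Finset Equiv

variable {n : ℕ} {v w : Equiv.Perm ℤ}

lemma caseA {i j : ℤ} (h1 : 1 ≤ i) (hij : i < j) (hjn : j ≤ (n:ℤ))
    (hvt : w = v * (Equiv.swap i j * Equiv.swap (-i) (-j))) :
    statB n w = statB n v + statB n (Equiv.swap i j * Equiv.swap (-i) (-j)) ↔
      (w j < w i ∧ ∀ k : ℤ, i < k → k < j → w k < w i ∧ w j < w k) := by
  have hvw : ∀ k, 1 ≤ k → k ≤ (n:ℤ) → k ≠ i → k ≠ j → v k = w k := by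
    intro k hk1 hk2 hk3 hk4
    rw [hvt, Equiv.Perm.mul_apply, tA_k h1 hij hk1 hk3 hk4]
  have hvi : v i = w j := by
    rw [hvt, Equiv.Perm.mul_apply, tA_j h1 hij]
  have hvj : v j = w i := by
    rw [hvt, Equiv.Perm.mul_apply, tA_i h1 hij]
  have hvw' : ∀ k, 1 ≤ k → k ≤ (n:ℤ) → k ≠ i → k ≠ j →
      (1 : Equiv.Perm ℤ) k = (Equiv.swap i j * Equiv.swap (-i) (-j)) k := by
    intro k hk1 hk2 hk3 hk4
    rw [Equiv.Perm.one_apply, tA_k h1 hij hk1 hk3 hk4]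
  have hvi' : (1 : Equiv.Perm ℤ) i = (Equiv.swap i j * Equiv.swap (-i) (-j)) j := by
    rw [Equiv.Perm.one_apply, tA_j h1 hij]
  have hvj' : (1 : Equiv.Perm ℤ) j = (Equiv.swap i j * Equiv.swap (-i) (-j)) i := by
    rw [Equiv.Perm.one_apply, tA_i h1 hij]
  have hiff := iffA n (Equiv.swap i j * Equiv.swap (-i) (-j)) 1 h1 hij hjn hvw' hvi' hvj'
  have h2 := hiff.mpr (by
    rw [tA_i h1 hij, tA_j h1 hij]
    refine ⟨hij, fun k hk1 hk2 => ?_⟩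
    rw [tA_k h1 hij (by omega) (by omega) (by omega)]
    exact ⟨hk2, hk1⟩)
  rw [statB_one] at h2
  have hiff2 := iffA n w v h1 hij hjn hvw hvi hvj
  constructor
  · intro h
    exact hiff2.mp (by omega)
  · intro h
    have := hiff2.mpr h
    omega

lemma caseB {i j : ℤ} (hw : w ∈ BGroup n) (h1 : 1 ≤ i) (hij : i < j) (hjn : j ≤ (n:ℤ))
    (hvt : w = v * (Equiv.swap (-i) j * Equiv.swap i (-j))) :
    statB n w = statB n v + statB n (Equiv.swap (-i) j * Equiv.swap i (-j)) ↔
      (w i < 0 ∧ w j < 0 ∧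
        (∀ k : ℤ, 1 ≤ k → k < i → w i < w k ∧ w k + w j < 0) ∧
        (∀ k : ℤ, k ≠ i → 1 ≤ k → k < j → w j < w k ∧ w i + w k < 0)) := by
  have hvw : ∀ k, 1 ≤ k → k ≤ (n:ℤ) → k ≠ i → k ≠ j → v k = w k := by
    intro k hk1 hk2 hk3 hk4
    rw [hvt, Equiv.Perm.mul_apply, tB_k h1 hij hk1 hk3 hk4]
  have h5 : w (-j) = v i := by
    rw [hvt, Equiv.Perm.mul_apply, tB_negj h1 hij]
  have hvi : v i = -(w j) := by rw [← h5]; exact w_neg hw j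
  have h6 : w (-i) = v j := by
    rw [hvt, Equiv.Perm.mul_apply, tB_negi h1 hij]
  have hvj : v j = -(w i) := by rw [← h6]; exact w_neg hw i
  have hmemt : (Equiv.swap (-i) j * Equiv.swap i (-j)) ∈ BGroup n := memB h1 hij hjn
  have hvw' : ∀ k, 1 ≤ k → k ≤ (n:ℤ) → k ≠ i → k ≠ j →
      (1 : Equiv.Perm ℤ) k = (Equiv.swap (-i) j * Equiv.swap i (-j)) k := by
    intro k hk1 hk2 hk3 hk4
    rw [Equiv.Perm.one_apply, tB_k h1 hij hk1 hk3 hk4]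
  have hvi' : (1 : Equiv.Perm ℤ) i = -((Equiv.swap (-i) j * Equiv.swap i (-j)) j) := by
    rw [Equiv.Perm.one_apply, tB_j h1 hij]; ring
  have hvj' : (1 : Equiv.Perm ℤ) j = -((Equiv.swap (-i) j * Equiv.swap i (-j)) i) := by
    rw [Equiv.Perm.one_apply, tB_i h1 hij]; ring
  have hiff := iffB hmemt 1 h1 hij hjn hvw' hvi' hvj'
  have h2 := hiff.mpr (by
    rw [tB_i h1 hij, tB_j h1 hij]
    refine ⟨by omega, by omega, fun k hk1 hk2 => ?_, fun k hki hk1 hk2 => ?_⟩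
    · rw [tB_k h1 hij hk1 (by omega) (by omega)]
      constructor <;> omega
    · rw [tB_k h1 hij hk1 hki (by omega)]
      constructor <;> omega)
  rw [statB_one] at h2
  have hiff2 := iffB hw v h1 hij hjn hvw hvi hvj
  constructor
  · intro h
    exact hiff2.mp (by omega)
  · intro h
    have := hiff2.mpr h
    omega

lemma caseC {i : ℤ} (hw : w ∈ BGroup n) (h1 : 1 ≤ i) (hin : i ≤ (n:ℤ))
    (hvt : w = v * Equiv.swap (-i) i) :
    statB n w = statB n v + statB n (Equiv.swap (-i) i) ↔
      (w i < 0 ∧ ∀ k : ℤ, 1 ≤ k → k < i → |w k| < |w i|) := by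
  have hvw : ∀ k, 1 ≤ k → k ≤ (n:ℤ) → k ≠ i → v k = w k := by
    intro k hk1 hk2 hk3
    rw [hvt, Equiv.Perm.mul_apply, tC_k h1 hk1 hk3]
  have h5 : w (-i) = v i := by
    rw [hvt, Equiv.Perm.mul_apply, tC_negi]
  have hvi : v i = -(w i) := by rw [← h5]; exact w_neg hw i
  have hmemt : Equiv.swap (-i) i ∈ BGroup n := memC h1 hin
  have hvw' : ∀ k, 1 ≤ k → k ≤ (n:ℤ) → k ≠ i →
      (1 : Equiv.Perm ℤ) k = Equiv.swap (-i) i k := by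
    intro k hk1 hk2 hk3
    rw [Equiv.Perm.one_apply, tC_k h1 hk1 hk3]
  have hvi' : (1 : Equiv.Perm ℤ) i = -(Equiv.swap (-i) i i) := by
    rw [Equiv.Perm.one_apply, tC_i]; ring
  have hiff := iffC hmemt 1 h1 hin hvw' hvi'
  have h2 := hiff.mpr (by
    rw [tC_i]
    refine ⟨by omega, fun k hk1 hk2 => ?_⟩
    rw [tC_k h1 hk1 (by omega)]
    rw [abs_of_nonneg (by omega : (0:ℤ) ≤ k), abs_neg,
      abs_of_nonneg (by omega : (0:ℤ) ≤ i)]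
    omega)
  rw [statB_one] at h2
  have hiff2 := iffC hw v h1 hin hvw hvi
  constructor
  · intro h
    exact hiff2.mp (by omega)
  · intro h
    have := hiff2.mpr h
    omega

end
end AuxLen

/-- **Lemma (additivity of length under right multiplication by a reflection, type B).**
For `v, w ∈ B_n` and a reflection `t` of `B_n` with `w = vt`, one has
`ℓ_S(w) = ℓ_S(v) + ℓ_S(t)` iff one of the three listed conditions holds. -/
theorem length_additive_iff_B (n : ℕ) (v w t : Equiv.Perm ℤ)
    (hv : v ∈ BGroup n) (hw : w ∈ BGroup n) (ht : IsBRefl n t) (hvt : w = v * t) :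
    lenB n w = lenB n v + lenB n t ↔
      ((∃ i j : ℤ, 1 ≤ i ∧ i < j ∧ j ≤ (n : ℤ) ∧
          t = Equiv.swap i j * Equiv.swap (-i) (-j) ∧
          w j < w i ∧ ∀ k : ℤ, i < k → k < j → w k < w i ∧ w j < w k) ∨
       (∃ i j : ℤ, 1 ≤ i ∧ i < j ∧ j ≤ (n : ℤ) ∧
          t = Equiv.swap (-i) j * Equiv.swap i (-j) ∧
          w i < 0 ∧ w j < 0 ∧
          (∀ k : ℤ, 1 ≤ k → k < i → w i < w k ∧ w k + w j < 0) ∧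
          (∀ k : ℤ, k ≠ i → 1 ≤ k → k < j → w j < w k ∧ w i + w k < 0)) ∨
       (∃ i : ℤ, 1 ≤ i ∧ i ≤ (n : ℤ) ∧ t = Equiv.swap (-i) i ∧
          w i < 0 ∧ ∀ k : ℤ, 1 ≤ k → k < i → |w k| < |w i|)) := by
  have htB : t ∈ BGroup n := by
    obtain ⟨d, hd⟩ := ht
    rcases hd with ⟨i,j,h1,h2,h3,rfl,-⟩|⟨i,j,h1,h2,h3,rfl,-⟩|⟨i,h1,h2,rfl,-⟩
    · exact AuxLen.memA h1 h2 h3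
    · exact AuxLen.memB h1 h2 h3
    · exact AuxLen.memC h1 h2
  have e1 := AuxLen.lenB_eq hw
  have e2 := AuxLen.lenB_eq hv
  have e3 := AuxLen.lenB_eq htB
  have hcast : lenB n w = lenB n v + lenB n t ↔
      AuxLen.statB n w = AuxLen.statB n v + AuxLen.statB n t := by
    constructor <;> intro h <;> omega
  rw [hcast]
  constructor
  · intro h
    obtain ⟨d, hd⟩ := ht
    rcases hd with ⟨i,j,h1,h2,h3,hform,-⟩|⟨i,j,h1,h2,h3,hform,-⟩|⟨i,h1,h2,hform,-⟩
    · subst hform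
      exact Or.inl ⟨i, j, h1, h2, h3, rfl, (AuxLen.caseA h1 h2 h3 hvt).mp h⟩
    · subst hform
      exact Or.inr (Or.inl ⟨i, j, h1, h2, h3, rfl, (AuxLen.caseB hw h1 h2 h3 hvt).mp h⟩)
    · subst hform
      exact Or.inr (Or.inr ⟨i, h1, h2, rfl, (AuxLen.caseC hw h1 h2 hvt).mp h⟩)
  · rintro (⟨i,j,h1,h2,h3,rfl,hcond⟩|⟨i,j,h1,h2,h3,rfl,hcond⟩|⟨i,h1,h2,rfl,hcond⟩)
    · exact (AuxLen.caseA h1 h2 h3 hvt).mpr hcond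
    · exact (AuxLen.caseB hw h1 h2 h3 hvt).mpr hcond
    · exact (AuxLen.caseC hw h1 h2 hvt).mpr hcond
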